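/- arXiv:2605.29650 — 2 statements merged into one kernel-verified Lean document; each statement's English description precedes it below -/
import Mathlib

section
/- Let (E,e,T) be a T-universally complete conditional Riesz triple. Then ba(C_e,R(T)) is an R(T)-module under pointwise addition and scalar multiplication, and the map μ ↦ |μ|(e) is an R(T)-valued norm on ba(C_e,R(T)): it satisfies the triangle inequality, ‖gμ‖ = |g|·‖μ‖ for all g ∈ R(T) and μ ∈ ba(C_e,R(T)), and ‖μ‖ = 0 iff μ = 0. -/
open scoped Classical

noncomputable section

namespace RieszPaper

universe u v w

/-! ### Basic Riesz space notions -/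

section BasicDefs

variable {E : Type u} [Lattice E] [AddCommGroup E]

/-- The positive part `x ⊔ 0`. -/
def rpos (x : E) : E := x ⊔ 0

/-- The set of components of `e`, i.e. elements `p` with `p ⊓ (e - p) = 0`. -/
def Comp (e : E) : Set E := {p | p ⊓ (e - p) = 0}

/-- Disjoint complement of a set. -/
def disjC (S : Set E) : Set E := {x | ∀ y ∈ S, |x| ⊓ |y| = 0}

/-- The principal band generated by `f` (as double disjoint complement). -/
def pBand (f : E) : Set E := disjC (disjC {f})

/-- `e` is a weak order unit: `e > 0` and the band generated by `e` is all of `E`. -/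
def IsWeakUnit (e : E) : Prop := 0 < e ∧ ∀ x : E, 0 ≤ x → x ⊓ e = 0 → x = 0

/-- The chain `x ⊓ n•|f|`, whose supremum is the band projection of `x ≥ 0`
onto the band generated by `f`. -/
def projChain (f x : E) : Set E := {y | ∃ n : ℕ, y = x ⊓ n • |f|}

/-- Band projection of a positive element onto the band generated by `f`. -/
def projP (f x : E) : E := if h : ∃ s, IsLUB (projChain f x) s then h.choose else 0

/-- Band projection onto the principal band generated by `f`. -/
def proj (f x : E) : E := projP f (rpos x) - projP f (rpos (-x))

/-- The principal projection property. -/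
def HasPPP (α : Type u) [Lattice α] [AddCommGroup α] : Prop :=
  ∀ f x : α, 0 ≤ x → ∃ s, IsLUB (projChain f x) s

/-- A subset is sequentially order closed. -/
def SeqOrderClosed (D : Set E) : Prop :=
  (∀ (x : ℕ → E) (l : E), (∀ n, x n ∈ D) → Monotone x → IsLUB (Set.range x) l → l ∈ D) ∧
  (∀ (x : ℕ → E) (l : E), (∀ n, x n ∈ D) → Antitone x → IsGLB (Set.range x) l → l ∈ D)

end BasicDefs

/-! ### Charges on components -/

section Charges

variable {E : Type u} [Lattice E] [AddCommGroup E]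
variable {F : Type v} [Lattice F] [AddCommGroup F]

/-- `μ` is an `F`-valued signed charge on the components of `e`. -/
def IsChargeOn (e : E) (μ : E → F) : Prop :=
  μ 0 = 0 ∧ ∀ p q : E, p ∈ Comp e → q ∈ Comp e → p ⊓ q = 0 → μ (p + q) = μ p + μ q

/-- `μ` is order bounded on the components of `e`. -/
def OrdBddOn (e : E) (μ : E → F) : Prop :=
  ∃ g : F, 0 ≤ g ∧ ∀ p ∈ Comp e, |μ p| ≤ g

/-- `ba(C_e, F)`: order bounded signed `F`-valued charges on the components of `e`. -/
def baSet (e : E) : Set (E → F) := {μ | IsChargeOn e μ ∧ OrdBddOn e μ}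

/-- The order on charges: `μ ≤ ν` iff `ν - μ` is positive on components. -/
def baLe (e : E) (μ ν : E → F) : Prop := ∀ p ∈ Comp e, μ p ≤ ν p

/-- `η` is the least upper bound of `S ⊆ ba(C_e,F)` within `ba(C_e,F)`. -/
def IsLUBba (e : E) (S : Set (E → F)) (η : E → F) : Prop :=
  η ∈ baSet e ∧ (∀ μ ∈ S, baLe e μ η) ∧
    ∀ ξ ∈ baSet e, (∀ μ ∈ S, baLe e μ ξ) → baLe e η ξ

/-- `η` is the greatest lower bound of `S ⊆ ba(C_e,F)` within `ba(C_e,F)`. -/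
def IsGLBba (e : E) (S : Set (E → F)) (η : E → F) : Prop :=
  η ∈ baSet e ∧ (∀ μ ∈ S, baLe e η μ) ∧
    ∀ ξ ∈ baSet e, (∀ μ ∈ S, baLe e ξ μ) → baLe e ξ η

end Charges

section ChargesCCL

variable {E : Type u} [Lattice E] [AddCommGroup E]
variable {F : Type v} [ConditionallyCompleteLattice F] [AddCommGroup F]

/-- Pointwise formula for the supremum of two charges. -/
def chSupAt (e : E) (μ ν : E → F) (p : E) : F :=
  sSup {v | ∃ q, q ∈ Comp e ∧ q ≤ p ∧ v = μ q + ν (p - q)}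

/-- Pointwise formula for the infimum of two charges. -/
def chInfAt (e : E) (μ ν : E → F) (p : E) : F :=
  sInf {v | ∃ q, q ∈ Comp e ∧ q ≤ p ∧ v = μ q + ν (p - q)}

/-- The modulus of a charge, via the Riesz–Kantorovich-type formula. -/
def chargeAbs (e : E) (μ : E → F) : E → F :=
  fun p => sSup {v | ∃ q, q ∈ Comp e ∧ q ≤ p ∧ v = μ q - μ (p - q)}

/-- The positive part of a charge. -/
def chargePos (e : E) (μ : E → F) : E → F :=
  fun p => sSup {v | ∃ q, q ∈ Comp e ∧ q ≤ p ∧ v = μ q}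

/-- The negative part of a charge. -/
def chargeNeg (e : E) (μ : E → F) : E → F :=
  fun p => sSup {v | ∃ q, q ∈ Comp e ∧ q ≤ p ∧ v = -(μ q)}

end ChargesCCL

/-! ### Operators -/

section Ops

variable {E : Type u} [Lattice E] [AddCommGroup E] [Module ℝ E]

def PosOn (Lp : Set E) (φ : E → E) : Prop := ∀ f ∈ Lp, 0 ≤ f → 0 ≤ φ f

def AddOn (Lp : Set E) (φ : E → E) : Prop :=
  ∀ f g : E, f ∈ Lp → g ∈ Lp → φ (f + g) = φ f + φ g

def SmulOn (Lp : Set E) (φ : E → E) : Prop :=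
  ∀ (r : ℝ) (f : E), f ∈ Lp → φ (r • f) = r • φ f

/-- `φ` is a regular operator on `Lp`: a difference of two positive linear maps. -/
def RegularOn (Lp : Set E) (φ : E → E) : Prop :=
  ∃ ψ₁ ψ₂ : E → E, AddOn Lp ψ₁ ∧ AddOn Lp ψ₂ ∧ SmulOn Lp ψ₁ ∧ SmulOn Lp ψ₂ ∧
    PosOn Lp ψ₁ ∧ PosOn Lp ψ₂ ∧ ∀ f ∈ Lp, φ f = ψ₁ f - ψ₂ f

/-- Uniform convergence of a sequence with regulator `u`. -/
def UnifConv (u : E) (s : ℕ → E) (f : E) : Prop :=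
  ∃ ε : ℕ → ℝ, Antitone ε ∧ Filter.Tendsto ε Filter.atTop (nhds 0) ∧
    ∀ n, |f - s n| ≤ ε n • u

end Ops

/-! ### Conditional expectation operators -/

section CondExp

variable {E : Type u} [ConditionallyCompleteLattice E] [AddCommGroup E] [Module ℝ E]

/-- `(E, e, T)` is a conditional Riesz triple: `e` is a weak order unit and `T` is a
strictly positive conditional expectation operator with `T e = e` whose range is a
Dedekind complete Riesz subspace. -/
structure IsCondTriple (e : E) (T : E →ₗ[ℝ] E) : Prop where
  weakUnit : IsWeakUnit e
  pos : ∀ x : E, 0 ≤ x → 0 ≤ T x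
  strictPos : ∀ x : E, 0 < x → 0 < T x
  ordCont : ∀ (A : Set E) (s : E), A.Nonempty → DirectedOn (· ≤ ·) A →
    IsLUB A s → IsLUB (T '' A) (T s)
  idem : ∀ x : E, T (T x) = T x
  unitFix : T e = e
  rangeSupClosed : ∀ x y : E, x ∈ Set.range T → y ∈ Set.range T → x ⊔ y ∈ Set.range T
  rangeDedekind : ∀ A : Set E, A ⊆ Set.range T → A.Nonempty → BddAbove A →
    sSup A ∈ Set.range T

end CondExp

/-! ### Universal completion and T-universal completeness -/

section Univ

variable {E : Type u} {G : Type v}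
variable [ConditionallyCompleteLattice E] [AddCommGroup E] [Module ℝ E]
variable [ConditionallyCompleteLattice G] [AddCommGroup G] [Module ℝ G]

/-- `j : E → G` realizes `G` as a universal completion of `E`. -/
structure IsUnivCompletion (j : E →ₗ[ℝ] G) : Prop where
  bipos : ∀ x : E, 0 ≤ j x ↔ 0 ≤ x
  latHom : ∀ x y : E, j (x ⊔ y) = j x ⊔ j y
  dense : ∀ z : G, 0 < z → ∃ x : E, 0 < j x ∧ j x ≤ z
  univComplete : ∀ S : Set G, (∀ x ∈ S, 0 ≤ x) →
    S.Pairwise (fun a b => a ⊓ b = 0) → BddAbove S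

/-- `E` is `T`-universally complete (relative to the universal completion `j : E → G`):
every nonempty upwards directed subset `A ⊆ E` such that `j[T[A]]` is bounded above in
`G` has a supremum in `E`. -/
def TUnivComplete (T : E →ₗ[ℝ] E) (j : E →ₗ[ℝ] G) : Prop :=
  ∀ A : Set E, A.Nonempty → DirectedOn (· ≤ ·) A →
    BddAbove (⇑j '' (⇑T '' A)) → BddAbove A

end Univ

/-- `mul` is a commutative `f`-algebra multiplication with unit `u`. -/
structure IsFAlgebraMul {G : Type v} [Lattice G] [AddCommGroup G] [Module ℝ G]
    (u : G) (mul : G → G → G) : Prop where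
  comm : ∀ x y, mul x y = mul y x
  assoc : ∀ x y z, mul (mul x y) z = mul x (mul y z)
  add_left : ∀ x y z, mul (x + y) z = mul x z + mul y z
  smul_left : ∀ (r : ℝ) (x y), mul (r • x) y = r • mul x y
  one_mul : ∀ x, mul u x = x
  mul_nonneg : ∀ x y, 0 ≤ x → 0 ≤ y → 0 ≤ mul x y
  disj : ∀ x y z, x ⊓ y = 0 → 0 ≤ z → mul x z ⊓ y = 0

/-! ### Bundled T-universally complete conditional Riesz triples -/

/-- A `T`-universally complete conditional Riesz triple `(E, e, T)`, together with a
universal completion `j : E → G` carrying its `f`-algebra multiplication (with unit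
`j e`).  Since `E = L¹(T)` is an `R(T)`-module, products of elements of `L^∞(T)` with
elements of `E` again lie in `E` (`mulClosed`). -/
structure CRT (E : Type u) (G : Type v)
    [ConditionallyCompleteLattice E] [AddCommGroup E] [Module ℝ E]
    [CovariantClass E E (· + ·) (· ≤ ·)] [PosSMulMono ℝ E]
    [ConditionallyCompleteLattice G] [AddCommGroup G] [Module ℝ G]
    [CovariantClass G G (· + ·) (· ≤ ·)] [PosSMulMono ℝ G] where
  e : E
  T : E →ₗ[ℝ] E
  j : E →ₗ[ℝ] G
  mul : G → G → G
  triple : IsCondTriple e T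
  compl : IsUnivCompletion j
  falg : IsFAlgebraMul (j e) mul
  tuc : TUnivComplete T j
  mulClosed : ∀ f g : E, (∃ h : E, h ∈ Set.range T ∧ 0 ≤ h ∧ |f| ≤ h) →
    mul (j f) (j g) ∈ Set.range ⇑j

namespace CRT

variable {E : Type u} {G : Type v}
variable [ConditionallyCompleteLattice E] [AddCommGroup E] [Module ℝ E]
  [CovariantClass E E (· + ·) (· ≤ ·)] [PosSMulMono ℝ E]
variable [ConditionallyCompleteLattice G] [AddCommGroup G] [Module ℝ G]
  [CovariantClass G G (· + ·) (· ≤ ·)] [PosSMulMono ℝ G]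
variable (C : CRT E G)

/-- The range `R(T)`. -/
def R : Set E := Set.range ⇑C.T

/-- The product `g · f` of two elements of `E = L¹(T)`, computed in the universal
completion (meaningful whenever the product lies again in `E`, e.g. for
`g ∈ R(T)` or `g ∈ L^∞(T)`). -/
def sm (g f : E) : E := @Function.invFun E G ⟨0⟩ (⇑C.j) (C.mul (C.j g) (C.j f))

/-- `L^∞(T) = {f : |f| ≤ g for some g ∈ R(T)₊}`. -/
def Linf : Set E := {f | ∃ h ∈ C.R, 0 ≤ h ∧ |f| ≤ h}

/-- The `R(T)`-valued norm `‖f‖_{T,1} = T |f|`. -/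
def nrm1 (f : E) : E := C.T |f|

/-- The `R(T)`-valued norm `‖f‖_{T,∞} = inf {α ∈ R(T)₊ : |f| ≤ α}`. -/
def nrmInf (f : E) : E := sInf {a | a ∈ C.R ∧ 0 ≤ a ∧ |f| ≤ a}

/-- Order bounded signed `R(T)`-valued charges on the components of `u`. -/
def baR (u : E) : Set (E → E) :=
  {μ | IsChargeOn u μ ∧ (∀ p ∈ Comp u, μ p ∈ C.R) ∧
     ∃ g ∈ C.R, 0 ≤ g ∧ ∀ p ∈ Comp u, |μ p| ≤ g}

/-- `ba(T)`: the `T`-absolutely continuous charges in `ba(C_e, R(T))`. -/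
def baT : Set (E → E) :=
  {μ | μ ∈ C.baR C.e ∧ ∀ p ∈ Comp C.e, μ p ∈ pBand (C.T p)}

/-- `x = ∑ αᵢ pᵢ` is a standard representation of the `e`-step function `x` with
`R(T)`-coefficients. -/
def IsStdRep (x : E) (n : ℕ) (α p : Fin n → E) : Prop :=
  (∀ i, α i ∈ C.R) ∧ (∀ i, p i ∈ Comp C.e) ∧
  (∀ i j, i ≠ j → p i ⊓ p j = 0) ∧ (∑ i, p i) = C.e ∧
  x = ∑ i, C.sm (α i) (p i)

/-- `S_e(T)`: the `e`-step functions with `R(T)`-coefficients. -/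
def Steps : Set E := {x | ∃ (n : ℕ) (α p : Fin n → E), C.IsStdRep x n α p}

/-- The integral `I_μ` of a step function: `I_μ (∑ αᵢ pᵢ) = ∑ αᵢ μ(pᵢ)`. -/
def Imu (μ : E → E) (x : E) : E :=
  @Classical.epsilon E ⟨0⟩ fun v =>
    ∃ (n : ℕ) (α p : Fin n → E), C.IsStdRep x n α p ∧ v = ∑ i, C.sm (α i) (μ (p i))

/-- The integral of a positive element of `L^∞(T)` with respect to a positive charge. -/
def intPos (μ : E → E) (f : E) : E :=
  sSup {v | ∃ g ∈ C.Steps, 0 ≤ g ∧ g ≤ f ∧ v = C.Imu μ g}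

/-- The integral `∫ f dμ = ∫ f⁺ dμ⁺ − ∫ f⁻ dμ⁺ − ∫ f⁺ dμ⁻ + ∫ f⁻ dμ⁻`. -/
def integral (μ : E → E) (f : E) : E :=
  C.intPos (chargePos C.e μ) (rpos f) - C.intPos (chargePos C.e μ) (rpos (-f))
    - C.intPos (chargeNeg C.e μ) (rpos f) + C.intPos (chargeNeg C.e μ) (rpos (-f))

/-- Membership in `L^r(Lp, R(T))`: regular linear operators with values in `R(T)`. -/
structure MemLr (Lp : Set E) (φ : E → E) : Prop where
  add : AddOn Lp φ
  smul : SmulOn Lp φ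
  mem : ∀ f ∈ Lp, φ f ∈ C.R
  regular : RegularOn Lp φ

/-- Membership in the `T`-strong dual of `(Lp, nrm)`: `R(T)`-linear, regular,
`nrm`-bounded maps into `R(T)`. -/
structure MemDual (Lp : Set E) (nrm : E → E) (φ : E → E) : Prop where
  add : AddOn Lp φ
  smul : SmulOn Lp φ
  modHom : ∀ g f : E, g ∈ C.R → f ∈ Lp → φ (C.sm g f) = C.sm g (φ f)
  mem : ∀ f ∈ Lp, φ f ∈ C.R
  regular : RegularOn Lp φ
  bdd : ∃ k ∈ C.R, 0 ≤ k ∧ ∀ f ∈ Lp, |φ f| ≤ C.sm k (nrm f)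

/-- The `R(T)`-valued norm on the `T`-strong dual. -/
def dualNorm (Lp : Set E) (nrm : E → E) (φ : E → E) : E :=
  sInf {g | g ∈ C.R ∧ 0 ≤ g ∧ ∀ f ∈ Lp, |φ f| ≤ C.sm g (nrm f)}

/-- `|φ| ≤ |ψ|` in `L^r(Lp, R(T))`, via the Riesz–Kantorovich formula. -/
def OpAbsLe (Lp : Set E) (φ ψ : E → E) : Prop :=
  ∀ f ∈ Lp, 0 ≤ f → ∀ g ∈ Lp, |g| ≤ f →
    |φ g| ≤ sSup {v | ∃ h, h ∈ Lp ∧ |h| ≤ f ∧ v = |ψ h|}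

/-- The canonical partial inverse of `h` in `R(T)`: the element `g` of the band
generated by `|h|` with `h g = P_{|h|} e`. -/
def pinv (h : E) : E :=
  @Classical.epsilon E ⟨0⟩ fun g =>
    g ∈ C.R ∧ g ∈ pBand (|h|) ∧ C.sm h g = proj (|h|) C.e

end CRT

/-! ### Bundled Dedekind complete Riesz spaces, for existential statements -/

structure BRiesz : Type (u + 1) where
  carrier : Type u
  [ccl : ConditionallyCompleteLattice carrier]
  [grp : AddCommGroup carrier]
  [mod : Module ℝ carrier]
  [cov : CovariantClass carrier carrier (· + ·) (· ≤ ·)]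
  [psm : PosSMulMono ℝ carrier]

attribute [instance] BRiesz.ccl BRiesz.grp BRiesz.mod BRiesz.cov BRiesz.psm

/-- `(F, ẽ, T̃)` together with `i : E → F` is a `T`-universal completion of `(E, e, T)`. -/
structure IsTUnivCompletion
    {E : Type u} [ConditionallyCompleteLattice E] [AddCommGroup E] [Module ℝ E]
    {F : Type v} [ConditionallyCompleteLattice F] [AddCommGroup F] [Module ℝ F]
    (e : E) (T : E →ₗ[ℝ] E) (e' : F) (T' : F →ₗ[ℝ] F) (i : E →ₗ[ℝ] F) : Prop where
  triple : IsCondTriple e' T'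
  tuniv : ∃ (U : BRiesz.{v}) (j : F →ₗ[ℝ] U.carrier),
    IsUnivCompletion j ∧ TUnivComplete T' j
  bipos : ∀ x : E, 0 ≤ i x ↔ 0 ≤ x
  latHom : ∀ x y : E, i (x ⊔ y) = i x ⊔ i y
  dense : ∀ z : F, 0 < z → ∃ x : E, 0 < i x ∧ i x ≤ z
  unit : i e = e'
  comm : ∀ x : E, T' (i x) = i (T x)


/-! ### Powers via functional calculus, for the spaces `L^p(T)` -/

/-- A `T`-universally complete conditional Riesz triple together with the power
functions `x ↦ x^p` (`x ≥ 0`, `p > 0`) of the functional calculus on the universal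
completion. -/
structure CRTP (E : Type u) (G : Type v)
    [ConditionallyCompleteLattice E] [AddCommGroup E] [Module ℝ E]
    [CovariantClass E E (· + ·) (· ≤ ·)] [PosSMulMono ℝ E]
    [ConditionallyCompleteLattice G] [AddCommGroup G] [Module ℝ G]
    [CovariantClass G G (· + ·) (· ≤ ·)] [PosSMulMono ℝ G]
    extends CRT E G where
  epow : G → ℝ → G
  epow_one : ∀ x : G, 0 ≤ x → epow x 1 = x
  epow_nonneg : ∀ (x : G) (p : ℝ), 0 ≤ x → 0 < p → 0 ≤ epow x p
  epow_mono : ∀ (x y : G) (p : ℝ), 0 ≤ x → x ≤ y → 0 < p → epow x p ≤ epow y p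
  epow_unit : ∀ p : ℝ, 0 < p → epow (toCRT.j toCRT.e) p = toCRT.j toCRT.e
  epow_exp_mul : ∀ (x : G) (p q : ℝ), 0 ≤ x → 0 < p → 0 < q →
    epow (epow x p) q = epow x (p * q)
  epow_mul : ∀ (x y : G) (p : ℝ), 0 ≤ x → 0 ≤ y → 0 < p →
    epow (toCRT.mul x y) p = toCRT.mul (epow x p) (epow y p)
  epow_succ : ∀ (x : G) (n : ℕ), 0 ≤ x → 0 < n →
    epow x ((n : ℝ) + 1) = toCRT.mul (epow x (n : ℝ)) x
  epow_sup : ∀ (x y : G) (p : ℝ), 0 ≤ x → 0 ≤ y → 0 < p →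
    epow (x ⊔ y) p = epow x p ⊔ epow y p
  epow_rangeT : ∀ (x : E) (p : ℝ), 0 ≤ x → 0 < p → x ∈ Set.range ⇑toCRT.T →
    epow (toCRT.j x) p ∈ ⇑toCRT.j '' Set.range ⇑toCRT.T

namespace CRTP

variable {E : Type u} {G : Type v}
variable [ConditionallyCompleteLattice E] [AddCommGroup E] [Module ℝ E]
  [CovariantClass E E (· + ·) (· ≤ ·)] [PosSMulMono ℝ E]
variable [ConditionallyCompleteLattice G] [AddCommGroup G] [Module ℝ G]
  [CovariantClass G G (· + ·) (· ≤ ·)] [PosSMulMono ℝ G]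
variable (C : CRTP E G)

/-- the `p`-th power of `x ∈ E`, computed in the universal completion. -/
def powE (x : E) (p : ℝ) : E :=
  @Function.invFun E G ⟨0⟩ (⇑C.toCRT.j) (C.epow (C.toCRT.j x) p)

/-- `L^p(T) = {f ∈ L¹(T) : |f|^p ∈ L¹(T)}` for `p ∈ [1, ∞)`. -/
def LpSet (p : ℝ) : Set E := {f | C.epow (C.toCRT.j |f|) p ∈ Set.range ⇑C.toCRT.j}

/-- The `R(T)`-valued norm `‖f‖_{T,p} = (T |f|^p)^{1/p}`. -/
def nrmP (p : ℝ) (f : E) : E := C.powE (C.toCRT.T (C.powE |f| p)) (1 / p)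

end CRTP

/-! ### Auxiliary lemmas -/

section AuxLattice

variable {α : Type w} [Lattice α] [AddCommGroup α] [CovariantClass α α (· + ·) (· ≤ ·)]

lemma aux_sub_inf (a b : α) : a - a ⊓ b = (a - b) ⊔ 0 := by
  rw [sub_inf, sub_self, sup_comm]

lemma aux_inf_eq_sub (a b : α) : a ⊓ b = a - ((a - b) ⊔ 0) := by
  rw [← aux_sub_inf]; abel

lemma aux_inf_add_le {a b c : α} (ha : 0 ≤ a) (hb : 0 ≤ b) (hc : 0 ≤ c) :
    (a + b) ⊓ c ≤ a ⊓ c + b ⊓ c := by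
  have h : a ⊓ c + b ⊓ c = ((a + b) ⊓ (c + b)) ⊓ ((a + c) ⊓ (c + c)) := by
    rw [add_inf, inf_add, inf_add]
  rw [h]
  exact le_inf (le_inf inf_le_left (inf_le_right.trans (le_add_of_nonneg_right hb)))
    (le_inf (inf_le_right.trans (le_add_of_nonneg_left ha))
      (inf_le_right.trans (le_add_of_nonneg_right hc)))

lemma aux_inf_add_le' {a b c : α} (ha : 0 ≤ a) (hb : 0 ≤ b) (hc : 0 ≤ c) :
    c ⊓ (a + b) ≤ c ⊓ a + c ⊓ b := by
  rw [inf_comm c (a + b), inf_comm c a, inf_comm c b]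
  exact aux_inf_add_le ha hb hc

lemma aux_disj_nsmul {a b : α} (ha : 0 ≤ a) (hb : 0 ≤ b) (h : a ⊓ b = 0) :
    ∀ n : ℕ, a ⊓ n • b = 0
  | 0 => by rw [zero_nsmul]; exact inf_of_le_right ha
  | (n + 1) => by
    have h1 : a ⊓ (n + 1) • b ≤ a ⊓ n • b + a ⊓ b := by
      rw [succ_nsmul]
      exact aux_inf_add_le' (nsmul_nonneg hb n) hb ha
    rw [aux_disj_nsmul ha hb h n, h, add_zero] at h1
    exact le_antisymm h1 (le_inf ha (nsmul_nonneg hb (n + 1)))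

lemma aux_disj_le {x b c : α} (hd : x ⊓ b = 0) (hle : x ≤ b + c) (hc : 0 ≤ c) : x ≤ c := by
  have h1 : x = (x - b) ⊔ 0 := by rw [← aux_sub_inf, hd, sub_zero]
  rw [h1]
  exact sup_le (by rwa [sub_le_iff_le_add']) hc

end AuxLattice

section AuxCCL

variable {β : Type w} [ConditionallyCompleteLattice β] [AddCommGroup β]
  [CovariantClass β β (· + ·) (· ≤ ·)]

lemma aux_arch {a X : β} (h : ∀ n : ℕ, n • a ≤ X) : a ≤ 0 := by
  have hne : (Set.range fun n : ℕ => n • a).Nonempty := ⟨0 • a, 0, rfl⟩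
  have hbdd : BddAbove (Set.range fun n : ℕ => n • a) := ⟨X, by rintro _ ⟨n, rfl⟩; exact h n⟩
  have hlub := isLUB_csSup hne hbdd
  set s := sSup (Set.range fun n : ℕ => n • a) with hs
  have h2 : ∀ n : ℕ, n • a ≤ s - a := by
    intro n
    have h3 : (n + 1) • a ≤ s := hlub.1 ⟨n + 1, rfl⟩
    rw [succ_nsmul] at h3
    exact le_sub_iff_add_le.2 h3
  have h4 : s ≤ s - a := hlub.2 (by rintro _ ⟨n, rfl⟩; exact h2 n)
  exact (le_sub_self_iff s).1 h4

lemma aux_isLUB_inf {A : Set β} {s : β} (q : β) (h : IsLUB A s) :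
    IsLUB ((fun a => a ⊓ q) '' A) (s ⊓ q) := by
  constructor
  · rintro _ ⟨a, ha, rfl⟩
    exact inf_le_inf_right q (h.1 ha)
  · intro w hw
    have h2 : ∀ a ∈ A, a ≤ w + ((s - q) ⊔ 0) := by
      intro a ha
      have h3 : a - a ⊓ q ≤ (s - q) ⊔ 0 := by
        rw [aux_sub_inf]
        exact sup_le_sup_right (sub_le_sub_right (h.1 ha) q) 0
      have h4 : a ⊓ q ≤ w := hw ⟨a, ha, rfl⟩
      calc a = a ⊓ q + (a - a ⊓ q) := by abel
        _ ≤ w + ((s - q) ⊔ 0) := add_le_add h4 h3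
    have h5 : s ≤ w + ((s - q) ⊔ 0) := h.2 h2
    have h6 : s - ((s - q) ⊔ 0) ≤ w := sub_le_iff_le_add.2 h5
    rwa [← aux_inf_eq_sub] at h6

lemma aux_W {w y z : β} (hw : 0 ≤ w) (hy : 0 ≤ y)
    (h : ∀ n : ℕ, z ≤ (w - n • y) ⊔ 0) : (z ⊔ 0) ⊓ y = 0 ∧ z ⊔ 0 ≤ w := by
  have hzp : ∀ n : ℕ, z ⊔ 0 ≤ (w - n • y) ⊔ 0 := fun n => sup_le (h n) le_sup_right
  have hzw : z ⊔ 0 ≤ w := by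
    have := hzp 0
    rwa [zero_nsmul, sub_zero, sup_eq_left.2 hw] at this
  have key : ∀ n : ℕ, n • ((z ⊔ 0) ⊓ y) ≤ w := by
    intro n
    set a := ((w - n • y) ⊔ 0) ⊓ y with ha
    have ha0 : (0:β) ≤ a := le_inf le_sup_right hy
    have hd : a ⊓ ((n • y - w) ⊔ 0) = 0 := by
      refine le_antisymm ?_ (le_inf ha0 le_sup_right)
      calc a ⊓ ((n • y - w) ⊔ 0) ≤ ((w - n • y) ⊔ 0) ⊓ ((n • y - w) ⊔ 0) :=
            inf_le_inf_right _ inf_le_left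
        _ = (w - n • y)⁺ ⊓ (w - n • y)⁻ := by rw [posPart_def, negPart_def, neg_sub]
        _ = 0 := posPart_inf_negPart_eq_zero _
    have hd2 : n • a ⊓ ((n • y - w) ⊔ 0) = 0 := by
      rw [inf_comm] at hd ⊢
      exact aux_disj_nsmul le_sup_right ha0 hd n
    have hle : n • a ≤ ((n • y - w) ⊔ 0) + n • y ⊓ w := by
      calc n • a ≤ n • y := nsmul_le_nsmul_right inf_le_right n
        _ = ((n • y - w) ⊔ 0) + n • y ⊓ w := by
            rw [← aux_sub_inf]; abel
    have h7 : n • a ≤ n • y ⊓ w := aux_disj_le hd2 hle (le_inf (nsmul_nonneg hy n) hw)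
    calc n • ((z ⊔ 0) ⊓ y) ≤ n • a := nsmul_le_nsmul_right (inf_le_inf_right y (hzp n)) n
      _ ≤ w := h7.trans inf_le_right
  have h8 : (z ⊔ 0) ⊓ y ≤ 0 := aux_arch key
  exact ⟨le_antisymm h8 (le_inf le_sup_right hy), hzw⟩

end AuxCCL

section AuxSmul

variable {β : Type w} [ConditionallyCompleteLattice β] [AddCommGroup β]
  [CovariantClass β β (· + ·) (· ≤ ·)] [Module ℝ β] [PosSMulMono ℝ β]

lemma aux_smul_le_smul {r s : ℝ} {x : β} (h : r ≤ s) (hx : 0 ≤ x) : r • x ≤ s • x := by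
  have h1 : 0 ≤ (s - r) • x := smul_nonneg (by linarith) hx
  calc r • x ≤ r • x + (s - r) • x := le_add_of_nonneg_right h1
    _ = s • x := by rw [← add_smul]; ring_nf

lemma aux_smul_disj {a b : β} (ha : 0 ≤ a) (hb : 0 ≤ b) (h : a ⊓ b = 0) {t : ℝ} (ht : 0 ≤ t) :
    (t • a) ⊓ b = 0 := by
  refine le_antisymm ?_ (le_inf (smul_nonneg ht ha) hb)
  have h1 : t • a ≤ (Nat.ceil t : ℝ) • a := aux_smul_le_smul (Nat.le_ceil t) ha
  rw [Nat.cast_smul_eq_nsmul] at h1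
  calc t • a ⊓ b ≤ (Nat.ceil t • a) ⊓ b := inf_le_inf_right b h1
    _ = 0 := by rw [inf_comm]; rw [inf_comm] at h; exact aux_disj_nsmul hb ha h _

lemma aux_isLUB_smul {A : Set β} {s : β} {r : ℝ} (hr : 0 < r) (h : IsLUB A s) :
    IsLUB ((fun a => r • a) '' A) (r • s) := by
  constructor
  · rintro _ ⟨a, ha, rfl⟩
    exact smul_le_smul_of_nonneg_left (h.1 ha) hr.le
  · intro w hw
    have h2 : ∀ a ∈ A, a ≤ r⁻¹ • w := by
      intro a ha
      have h3 : r • a ≤ w := hw ⟨a, ha, rfl⟩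
      calc a = r⁻¹ • (r • a) := by rw [smul_smul, inv_mul_cancel₀ hr.ne', one_smul]
        _ ≤ r⁻¹ • w := smul_le_smul_of_nonneg_left h3 (by positivity)
    have h4 : s ≤ r⁻¹ • w := h.2 h2
    calc r • s ≤ r • (r⁻¹ • w) := smul_le_smul_of_nonneg_left h4 hr.le
      _ = w := by rw [smul_smul, mul_inv_cancel₀ hr.ne', one_smul]

end AuxSmul

section AuxFAlg

variable {β : Type w} [ConditionallyCompleteLattice β] [AddCommGroup β]
  [CovariantClass β β (· + ·) (· ≤ ·)] [Module ℝ β] [PosSMulMono ℝ β]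
  {u : β} {mulG : β → β → β}

lemma fa_zero_left (hm : IsFAlgebraMul u mulG) (y : β) : mulG 0 y = 0 := by
  have h := hm.smul_left 0 0 y
  simpa using h

lemma fa_zero_right (hm : IsFAlgebraMul u mulG) (x : β) : mulG x 0 = 0 := by
  rw [hm.comm]; exact fa_zero_left hm x

lemma fa_add_right (hm : IsFAlgebraMul u mulG) (x y z : β) :
    mulG x (y + z) = mulG x y + mulG x z := by
  rw [hm.comm, hm.add_left, hm.comm y x, hm.comm z x]

lemma fa_neg_left (hm : IsFAlgebraMul u mulG) (x y : β) : mulG (-x) y = -mulG x y := by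
  have h := hm.add_left x (-x) y
  rw [add_neg_cancel, fa_zero_left hm] at h
  rw [eq_neg_iff_add_eq_zero, add_comm]
  exact h.symm

lemma fa_neg_right (hm : IsFAlgebraMul u mulG) (x y : β) : mulG x (-y) = -mulG x y := by
  rw [hm.comm, fa_neg_left hm, hm.comm]

lemma fa_sub_left (hm : IsFAlgebraMul u mulG) (x y z : β) :
    mulG (x - y) z = mulG x z - mulG y z := by
  rw [sub_eq_add_neg, hm.add_left, fa_neg_left hm, sub_eq_add_neg]

lemma fa_sub_right (hm : IsFAlgebraMul u mulG) (x y z : β) :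
    mulG x (y - z) = mulG x y - mulG x z := by
  rw [hm.comm, fa_sub_left hm, hm.comm y x, hm.comm z x]

lemma fa_smul_right (hm : IsFAlgebraMul u mulG) (r : ℝ) (x y : β) :
    mulG x (r • y) = r • mulG x y := by
  rw [hm.comm, hm.smul_left, hm.comm]

lemma fa_nsmul_left (hm : IsFAlgebraMul u mulG) (n : ℕ) (x y : β) :
    mulG (n • x) y = n • mulG x y := by
  rw [← Nat.cast_smul_eq_nsmul ℝ, hm.smul_left, Nat.cast_smul_eq_nsmul]

lemma fa_mono_right (hm : IsFAlgebraMul u mulG) {h a b : β} (hh : 0 ≤ h) (hab : a ≤ b) :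
    mulG h a ≤ mulG h b := by
  have h1 : 0 ≤ mulG h (b - a) := hm.mul_nonneg h (b - a) hh (sub_nonneg.2 hab)
  rw [fa_sub_right hm, sub_nonneg] at h1
  exact h1

lemma fa_mono_left (hm : IsFAlgebraMul u mulG) {h a b : β} (hh : 0 ≤ h) (hab : a ≤ b) :
    mulG a h ≤ mulG b h := by
  rw [hm.comm a h, hm.comm b h]; exact fa_mono_right hm hh hab

lemma fa_posPart (hm : IsFAlgebraMul u mulG) {y : β} (hy : 0 ≤ y) (a : β) :
    mulG (a⁺) y = (mulG a y)⁺ := by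
  have hd : a⁺ ⊓ a⁻ = 0 := posPart_inf_negPart_eq_zero a
  have d1 : mulG (a⁺) y ⊓ a⁻ = 0 := hm.disj _ _ _ hd hy
  have d2 : mulG (a⁻) y ⊓ mulG (a⁺) y = 0 := by
    refine hm.disj (a⁻) (mulG (a⁺) y) y ?_ hy
    rw [inf_comm]; exact d1
  have heq : mulG a y = mulG (a⁺) y - mulG (a⁻) y := by
    rw [← fa_sub_left hm, posPart_sub_negPart]
  have d2' : mulG (a⁺) y ⊓ mulG (a⁻) y = 0 := by rw [inf_comm]; exact d2
  rw [posPart_def (mulG a y), heq, ← aux_sub_inf, d2', sub_zero]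

lemma fa_OC1 (hm : IsFAlgebraMul u mulG) {h y z : β} (hh : 0 ≤ h) (hy : 0 ≤ y)
    (hz : ∀ n : ℕ, z ≤ mulG ((h - n • u) ⊔ 0) y) : z ≤ 0 := by
  have hXn : ∀ n : ℕ, mulG ((h - n • u) ⊔ 0) y = (mulG h y - n • y) ⊔ 0 := by
    intro n
    have h1 : mulG ((h - n • u)⁺) y = (mulG (h - n • u) y)⁺ := fa_posPart hm hy _
    rw [posPart_def, posPart_def] at h1
    rw [h1, fa_sub_left hm, fa_nsmul_left hm, hm.one_mul]
  have hX0 : 0 ≤ mulG h y := hm.mul_nonneg h y hh hy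
  have hW := aux_W hX0 hy (fun n => (hz n).trans_eq (hXn n))
  have hd : mulG y h ⊓ (z ⊔ 0) = 0 := by
    refine hm.disj y (z ⊔ 0) h ?_ hh
    rw [inf_comm]; exact hW.1
  rw [hm.comm] at hd
  have h2 : z ⊔ 0 = 0 := by
    have h3 : (z ⊔ 0) ⊓ mulG h y = z ⊔ 0 := inf_eq_left.2 hW.2
    rw [inf_comm] at h3
    rw [← h3, hd]
  exact sup_eq_right.1 h2

lemma fa_OC2 (hm : IsFAlgebraMul u mulG) {h Y z : β} (hh : 0 ≤ h) (D : Set β)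
    (hne : D.Nonempty) (hD0 : ∀ y ∈ D, 0 ≤ y) (hDY : ∀ y ∈ D, y ≤ Y)
    (hinf : ∀ w, (∀ y ∈ D, w ≤ y) → w ≤ 0)
    (hz : ∀ y ∈ D, z ≤ mulG h y) : z ≤ 0 := by
  obtain ⟨y₀, hy₀⟩ := hne
  have hY0 : 0 ≤ Y := (hD0 y₀ hy₀).trans (hDY y₀ hy₀)
  have key : ∀ n : ℕ, z ≤ mulG ((h - n • u) ⊔ 0) Y := by
    intro n
    rcases Nat.eq_zero_or_pos n with hn | hn
    · subst hn
      have h1 : h ≤ (h - (0:ℕ) • u) ⊔ 0 := by rw [zero_nsmul, sub_zero]; exact le_sup_left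
      calc z ≤ mulG h y₀ := hz y₀ hy₀
        _ ≤ mulG h Y := fa_mono_right hm hh (hDY y₀ hy₀)
        _ ≤ mulG ((h - (0:ℕ) • u) ⊔ 0) Y := fa_mono_left hm hY0 h1
    · have hsplit : h = h ⊓ (n • u) + ((h - n • u) ⊔ 0) := by
        rw [← aux_sub_inf]; abel
      have hstep : ∀ y ∈ D, z - mulG ((h - n • u) ⊔ 0) Y ≤ n • y := by
        intro y hy
        have h1 : mulG h y = mulG (h ⊓ (n • u)) y + mulG ((h - n • u) ⊔ 0) y := by
          rw [← hm.add_left, ← hsplit]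
        have h2 : mulG (h ⊓ (n • u)) y ≤ n • y := by
          calc mulG (h ⊓ (n • u)) y ≤ mulG (n • u) y := fa_mono_left hm (hD0 y hy) inf_le_right
            _ = n • y := by rw [fa_nsmul_left hm, hm.one_mul]
        have h3 : mulG ((h - n • u) ⊔ 0) y ≤ mulG ((h - n • u) ⊔ 0) Y :=
          fa_mono_right hm le_sup_right (hDY y hy)
        have h4 : z ≤ n • y + mulG ((h - n • u) ⊔ 0) Y := by
          calc z ≤ mulG h y := hz y hy
            _ = mulG (h ⊓ (n • u)) y + mulG ((h - n • u) ⊔ 0) y := h1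
            _ ≤ n • y + mulG ((h - n • u) ⊔ 0) Y := add_le_add h2 h3
        exact sub_le_iff_le_add.2 h4
      have h5 : ∀ y ∈ D, ((n:ℝ)⁻¹) • (z - mulG ((h - n • u) ⊔ 0) Y) ≤ y := by
        intro y hy
        have h6 := smul_le_smul_of_nonneg_left (hstep y hy) (by positivity : (0:ℝ) ≤ (n:ℝ)⁻¹)
        rwa [← Nat.cast_smul_eq_nsmul ℝ n y, smul_smul,
          inv_mul_cancel₀ (by exact_mod_cast hn.ne' : (n:ℝ) ≠ 0), one_smul] at h6
      have h7 : ((n:ℝ)⁻¹) • (z - mulG ((h - n • u) ⊔ 0) Y) ≤ 0 := hinf _ h5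
      have h8 := smul_le_smul_of_nonneg_left h7 (by positivity : (0:ℝ) ≤ (n:ℝ))
      rw [smul_smul, mul_inv_cancel₀ (by exact_mod_cast hn.ne' : (n:ℝ) ≠ 0), one_smul,
        smul_zero] at h8
      exact sub_nonpos.1 h8
  exact fa_OC1 hm hh hY0 key

lemma fa_pair_disj (hm : IsFAlgebraMul u mulG) {a b c d : β}
    (hab : a ⊓ b = 0) (hc : 0 ≤ c) (hd : 0 ≤ d) :
    mulG a c ⊓ mulG b d = 0 := by
  have h1 : mulG a c ⊓ b = 0 := hm.disj a b c hab hc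
  have h2 : mulG b d ⊓ mulG a c = 0 := by
    refine hm.disj b (mulG a c) d ?_ hd
    rw [inf_comm]; exact h1
  rw [inf_comm]; exact h2

lemma fa_abs (hm : IsFAlgebraMul u mulG) (a b : β) : |mulG a b| = mulG |a| |b| := by
  set P := mulG (a⁺) (b⁺) + mulG (a⁻) (b⁻) with hP
  set Q := mulG (a⁺) (b⁻) + mulG (a⁻) (b⁺) with hQ
  have nn : ∀ x y : β, 0 ≤ x → 0 ≤ y → 0 ≤ mulG x y := fun x y hx hy => hm.mul_nonneg x y hx hy
  have hP0 : 0 ≤ P := add_nonneg (nn _ _ (posPart_nonneg a) (posPart_nonneg b))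
    (nn _ _ (negPart_nonneg a) (negPart_nonneg b))
  have hQ0 : 0 ≤ Q := add_nonneg (nn _ _ (posPart_nonneg a) (negPart_nonneg b))
    (nn _ _ (negPart_nonneg a) (posPart_nonneg b))
  have habs : mulG |a| |b| = P + Q := by
    rw [← posPart_add_negPart a, ← posPart_add_negPart b, hm.add_left,
      fa_add_right hm, fa_add_right hm, hP, hQ]
    abel
  have hmul : mulG a b = P - Q := by
    conv_lhs => rw [← posPart_sub_negPart a, ← posPart_sub_negPart b]
    rw [fa_sub_left hm, fa_sub_right hm, fa_sub_right hm, hP, hQ]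
    abel
  have daa := posPart_inf_negPart_eq_zero a
  have dbb := posPart_inf_negPart_eq_zero b
  have dbb' : b⁻ ⊓ b⁺ = 0 := by rw [inf_comm]; exact dbb
  have daa' : a⁻ ⊓ a⁺ = 0 := by rw [inf_comm]; exact daa
  have d11 : mulG (a⁺) (b⁺) ⊓ mulG (a⁺) (b⁻) = 0 := by
    rw [hm.comm (a⁺) (b⁺), hm.comm (a⁺) (b⁻)]
    exact fa_pair_disj hm dbb (posPart_nonneg a) (posPart_nonneg a)
  have d12 : mulG (a⁺) (b⁺) ⊓ mulG (a⁻) (b⁺) = 0 :=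
    fa_pair_disj hm daa (posPart_nonneg b) (posPart_nonneg b)
  have d21 : mulG (a⁻) (b⁻) ⊓ mulG (a⁺) (b⁻) = 0 :=
    fa_pair_disj hm daa' (negPart_nonneg b) (negPart_nonneg b)
  have d22 : mulG (a⁻) (b⁻) ⊓ mulG (a⁻) (b⁺) = 0 := by
    rw [hm.comm (a⁻) (b⁻), hm.comm (a⁻) (b⁺)]
    exact fa_pair_disj hm dbb' (negPart_nonneg a) (negPart_nonneg a)
  have hPQ : P ⊓ Q = 0 := by
    refine le_antisymm ?_ (le_inf hP0 hQ0)
    have e1 : mulG (a⁺) (b⁺) ⊓ Q ≤ 0 := by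
      calc mulG (a⁺) (b⁺) ⊓ Q ≤ mulG (a⁺) (b⁺) ⊓ mulG (a⁺) (b⁻) +
            mulG (a⁺) (b⁺) ⊓ mulG (a⁻) (b⁺) := aux_inf_add_le'
              (nn _ _ (posPart_nonneg a) (negPart_nonneg b))
              (nn _ _ (negPart_nonneg a) (posPart_nonneg b))
              (nn _ _ (posPart_nonneg a) (posPart_nonneg b))
        _ = 0 := by rw [d11, d12, add_zero]
    have e2 : mulG (a⁻) (b⁻) ⊓ Q ≤ 0 := by
      calc mulG (a⁻) (b⁻) ⊓ Q ≤ mulG (a⁻) (b⁻) ⊓ mulG (a⁺) (b⁻) +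
            mulG (a⁻) (b⁻) ⊓ mulG (a⁻) (b⁺) := aux_inf_add_le'
              (nn _ _ (posPart_nonneg a) (negPart_nonneg b))
              (nn _ _ (negPart_nonneg a) (posPart_nonneg b))
              (nn _ _ (negPart_nonneg a) (negPart_nonneg b))
        _ = 0 := by rw [d21, d22, add_zero]
    calc P ⊓ Q ≤ mulG (a⁺) (b⁺) ⊓ Q + mulG (a⁻) (b⁻) ⊓ Q := aux_inf_add_le
          (nn _ _ (posPart_nonneg a) (posPart_nonneg b))
          (nn _ _ (negPart_nonneg a) (negPart_nonneg b)) hQ0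
      _ ≤ 0 + 0 := add_le_add e1 e2
      _ = 0 := by rw [add_zero]
  have hQP : Q ⊓ P = 0 := by rw [inf_comm]; exact hPQ
  rw [hmul, habs, ← posPart_add_negPart (P - Q)]
  have h1 : (P - Q)⁺ = P := by rw [posPart_def, ← aux_sub_inf, hPQ, sub_zero]
  have h2 : (P - Q)⁻ = Q := by
    rw [negPart_def, neg_sub, ← aux_sub_inf, hQP, sub_zero]
  rw [h1, h2]

lemma fa_compLUB (hm : IsFAlgebraMul u mulG) {p x : β} (hp : p ⊓ (u - p) = 0) (hx : 0 ≤ x) :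
    IsLUB {v | ∃ n : ℕ, v = x ⊓ n • p} (mulG p x) := by
  have hp0 : 0 ≤ p := by rw [← hp]; exact inf_le_left
  have hq0 : 0 ≤ u - p := by rw [← hp]; exact inf_le_right
  have hsplit : mulG p x + mulG (u - p) x = x := by
    rw [← hm.add_left, add_sub_cancel, hm.one_mul]
  have hmp0 : 0 ≤ mulG p x := hm.mul_nonneg p x hp0 hx
  have hm'0 : 0 ≤ mulG (u - p) x := hm.mul_nonneg _ x hq0 hx
  have hd1 : mulG (u - p) x ⊓ p = 0 := by
    refine hm.disj (u - p) p x ?_ hx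
    rw [inf_comm]; exact hp
  have hub : ∀ n : ℕ, x ⊓ n • p ≤ mulG p x := by
    intro n
    have h1 : x ⊓ n • p ≤ mulG p x ⊓ n • p + mulG (u - p) x ⊓ n • p := by
      conv_lhs => rw [← hsplit]
      exact aux_inf_add_le hmp0 hm'0 (nsmul_nonneg hp0 n)
    have h2 : mulG (u - p) x ⊓ n • p = 0 := aux_disj_nsmul hm'0 hp0 hd1 n
    calc x ⊓ n • p ≤ mulG p x ⊓ n • p + mulG (u - p) x ⊓ n • p := h1
      _ = mulG p x ⊓ n • p := by rw [h2, add_zero]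
      _ ≤ mulG p x := inf_le_left
  constructor
  · rintro _ ⟨n, rfl⟩; exact hub n
  · intro t ht
    have hmpx : mulG p x ≤ x := by
      calc mulG p x ≤ mulG p x + mulG (u - p) x := le_add_of_nonneg_right hm'0
        _ = x := hsplit
    have hn : ∀ n : ℕ, mulG p x - t ≤ (mulG p x - n • p) ⊔ 0 := by
      intro n
      have h1 : x ⊓ n • p ≤ t := ht ⟨n, rfl⟩
      have h2 : mulG p x ⊓ n • p ≤ x ⊓ n • p := inf_le_inf_right _ hmpx
      calc mulG p x - t ≤ mulG p x - mulG p x ⊓ n • p := by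
            exact sub_le_sub_left (h2.trans h1) _
        _ = (mulG p x - n • p) ⊔ 0 := aux_sub_inf _ _
    have hW := aux_W hmp0 hp0 hn
    have hd3 : mulG p x ⊓ ((mulG p x - t) ⊔ 0) = 0 := by
      refine hm.disj p ((mulG p x - t) ⊔ 0) x ?_ hx
      rw [inf_comm]; exact hW.1
    have h4 : (mulG p x - t) ⊔ 0 = 0 := by
      have h5 : ((mulG p x - t) ⊔ 0) ⊓ mulG p x = (mulG p x - t) ⊔ 0 := inf_eq_left.2 hW.2
      rw [inf_comm] at h5
      rw [← h5, hd3]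
    have h6 : mulG p x - t ≤ 0 := by
      rw [← h4]; exact le_sup_left
    exact sub_nonpos.1 h6

lemma fa_M (hm : IsFAlgebraMul u mulG) {A : Set β} {a : β} (hA : A.Nonempty)
    (hsym : ∀ v ∈ A, -v ∈ A) (ha : IsLUB A a) (c : β) :
    IsLUB ((fun v => mulG c v) '' A) (mulG |c| a) := by
  obtain ⟨v₀, hv₀⟩ := hA
  have habs_le : ∀ v ∈ A, |v| ≤ a := by
    intro v hv
    exact abs_le'.2 ⟨ha.1 hv, ha.1 (hsym v hv)⟩
  have ha0 : 0 ≤ a := (abs_nonneg v₀).trans (habs_le v₀ hv₀)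
  constructor
  · rintro _ ⟨v, hv, rfl⟩
    have h1 : mulG (c⁺) v ≤ mulG (c⁺) a := fa_mono_right hm (posPart_nonneg c) (ha.1 hv)
    have h2 : mulG (c⁻) (-v) ≤ mulG (c⁻) a := fa_mono_right hm (negPart_nonneg c)
      (ha.1 (hsym v hv))
    rw [fa_neg_right hm] at h2
    calc mulG c v = mulG (c⁺) v - mulG (c⁻) v := by
          rw [← fa_sub_left hm, posPart_sub_negPart]
      _ ≤ mulG (c⁺) a + mulG (c⁻) a := by
          have := add_le_add h1 h2
          calc mulG (c⁺) v - mulG (c⁻) v = mulG (c⁺) v + -mulG (c⁻) v := by abel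
            _ ≤ mulG (c⁺) a + mulG (c⁻) a := add_le_add h1 h2
      _ = mulG |c| a := by rw [← hm.add_left, posPart_add_negPart]
  · intro t ht
    have habs : ∀ v ∈ A, mulG |c| |v| ≤ t := by
      intro v hv
      have h1 : mulG c v ≤ t := ht ⟨v, hv, rfl⟩
      have h2 : -mulG c v ≤ t := by
        rw [← fa_neg_right hm]; exact ht ⟨-v, hsym v hv, rfl⟩
      have h3 : |mulG c v| ≤ t := abs_le'.2 ⟨h1, h2⟩
      rwa [fa_abs hm] at h3
    have hz : mulG |c| a - t ≤ 0 := by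
      refine fa_OC2 hm (Y := a) (abs_nonneg c) ((fun v => a - |v|) '' A) ⟨a - |v₀|, v₀, hv₀, rfl⟩
        ?_ ?_ ?_ ?_
      · rintro _ ⟨v, hv, rfl⟩; exact sub_nonneg.2 (habs_le v hv)
      · rintro _ ⟨v, hv, rfl⟩
        exact sub_le_self a (abs_nonneg v)
      · intro w hw
        have h1 : ∀ v ∈ A, v ≤ a - w := by
          intro v hv
          have h2 : w ≤ a - |v| := hw _ ⟨v, hv, rfl⟩
          have h3 : |v| ≤ a - w := by
            rw [le_sub_comm] at h2; exact h2
          exact (le_abs_self v).trans h3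
        have h4 : a ≤ a - w := ha.2 h1
        exact (le_sub_self_iff a).1 h4
      · rintro _ ⟨v, hv, rfl⟩
        rw [fa_sub_right hm]
        exact sub_le_sub_left (habs v hv) _
    exact sub_nonpos.1 hz

end AuxFAlg

namespace CRT

variable {E : Type u} {G : Type v}
variable [ConditionallyCompleteLattice E] [AddCommGroup E] [Module ℝ E]
  [CovariantClass E E (· + ·) (· ≤ ·)] [PosSMulMono ℝ E]
variable [ConditionallyCompleteLattice G] [AddCommGroup G] [Module ℝ G]
  [CovariantClass G G (· + ·) (· ≤ ·)] [PosSMulMono ℝ G]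
variable (C : CRT E G)

lemma aux_j_le_iff {x y : E} : C.j x ≤ C.j y ↔ x ≤ y := by
  rw [← sub_nonneg, ← map_sub, C.compl.bipos, sub_nonneg]

lemma aux_j_nonneg {x : E} : 0 ≤ C.j x ↔ 0 ≤ x := C.compl.bipos x

lemma aux_j_inj : Function.Injective ⇑C.j := by
  intro x y h
  exact le_antisymm ((C.aux_j_le_iff).1 h.le) ((C.aux_j_le_iff).1 h.ge)

lemma aux_j_sup (x y : E) : C.j (x ⊔ y) = C.j x ⊔ C.j y := C.compl.latHom x y

lemma aux_j_inf (x y : E) : C.j (x ⊓ y) = C.j x ⊓ C.j y := by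
  have h1 : x ⊓ y = -(-x ⊔ -y) := by rw [neg_sup, neg_neg, neg_neg]
  rw [h1, map_neg, aux_j_sup, map_neg, map_neg, neg_sup, neg_neg, neg_neg]

lemma aux_j_abs (x : E) : C.j |x| = |C.j x| := by
  show C.j (x ⊔ -x) = C.j x ⊔ -C.j x
  rw [aux_j_sup, map_neg]

lemma aux_j_isLUB {A : Set E} {s : E} (h : IsLUB A s) : IsLUB (⇑C.j '' A) (C.j s) := by
  constructor
  · rintro _ ⟨a, ha, rfl⟩
    exact (C.aux_j_le_iff).2 (h.1 ha)
  · intro w hw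
    by_contra hno
    set z := (C.j s - w) ⊔ 0 with hz
    have hz0 : 0 ≤ z := le_sup_right
    have hzne : z ≠ 0 := by
      intro h0
      apply hno
      have h1 : C.j s - w ≤ 0 := by rw [← h0]; exact le_sup_left
      exact sub_nonpos.1 h1
    obtain ⟨x, hx1, hx2⟩ := C.compl.dense z (lt_of_le_of_ne hz0 (Ne.symm hzne))
    have hub : ∀ a ∈ A, a ≤ s - x := by
      intro a ha
      have h1 : C.j a ≤ C.j s ⊓ w := le_inf ((C.aux_j_le_iff).2 (h.1 ha)) (hw ⟨a, ha, rfl⟩)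
      have h2 : C.j s ⊓ w = C.j s - z := by rw [hz, ← aux_inf_eq_sub]
      have h3 : C.j a ≤ C.j (s - x) := by
        rw [map_sub]
        calc C.j a ≤ C.j s - z := h1.trans_eq h2
          _ ≤ C.j s - C.j x := sub_le_sub_left hx2 _
      exact (C.aux_j_le_iff).1 h3
    have h5 : s ≤ s - x := h.2 hub
    have h6 : x ≤ 0 := (le_sub_self_iff s).1 h5
    have h7 : C.j x ≤ 0 := by
      rw [← map_zero C.j]; exact (C.aux_j_le_iff).2 h6
    exact absurd (hx1.trans_le h7) (lt_irrefl 0)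

lemma aux_isLUB_of_j {A : Set E} {s : E} (h : IsLUB (⇑C.j '' A) (C.j s)) : IsLUB A s := by
  constructor
  · intro a ha
    exact (C.aux_j_le_iff).1 (h.1 ⟨a, ha, rfl⟩)
  · intro w hw
    refine (C.aux_j_le_iff).1 (h.2 ?_)
    rintro _ ⟨a, ha, rfl⟩
    exact (C.aux_j_le_iff).2 (hw ha)

/-! R(T) facts -/

lemma aux_e_mem : C.e ∈ C.R := ⟨C.e, C.triple.unitFix⟩

lemma aux_zero_mem : (0 : E) ∈ C.R := ⟨0, map_zero _⟩

lemma aux_add_mem {x y : E} (hx : x ∈ C.R) (hy : y ∈ C.R) : x + y ∈ C.R := by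
  obtain ⟨a, rfl⟩ := hx; obtain ⟨b, rfl⟩ := hy
  exact ⟨a + b, map_add _ a b⟩

lemma aux_neg_mem {x : E} (hx : x ∈ C.R) : -x ∈ C.R := by
  obtain ⟨a, rfl⟩ := hx
  exact ⟨-a, map_neg _ a⟩

lemma aux_sub_mem {x y : E} (hx : x ∈ C.R) (hy : y ∈ C.R) : x - y ∈ C.R := by
  rw [sub_eq_add_neg]; exact C.aux_add_mem hx (C.aux_neg_mem hy)

lemma aux_smul_mem {x : E} (r : ℝ) (hx : x ∈ C.R) : r • x ∈ C.R := by
  obtain ⟨a, rfl⟩ := hx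
  exact ⟨r • a, map_smul _ r a⟩

lemma aux_nsmul_mem {x : E} (n : ℕ) (hx : x ∈ C.R) : n • x ∈ C.R := by
  rw [← Nat.cast_smul_eq_nsmul ℝ]; exact C.aux_smul_mem _ hx

lemma aux_sup_mem {x y : E} (hx : x ∈ C.R) (hy : y ∈ C.R) : x ⊔ y ∈ C.R :=
  C.triple.rangeSupClosed x y hx hy

lemma aux_inf_mem {x y : E} (hx : x ∈ C.R) (hy : y ∈ C.R) : x ⊓ y ∈ C.R := by
  have h1 : x ⊓ y = -(-x ⊔ -y) := by rw [neg_sup, neg_neg, neg_neg]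
  rw [h1]
  exact C.aux_neg_mem (C.aux_sup_mem (C.aux_neg_mem hx) (C.aux_neg_mem hy))

lemma aux_posPart_mem {x : E} (hx : x ∈ C.R) : x ⊔ 0 ∈ C.R :=
  C.aux_sup_mem hx C.aux_zero_mem

lemma aux_abs_mem {x : E} (hx : x ∈ C.R) : |x| ∈ C.R := by
  show x ⊔ -x ∈ C.R
  exact C.aux_sup_mem hx (C.aux_neg_mem hx)

lemma aux_sSup_mem {A : Set E} (hA : A ⊆ C.R) (hne : A.Nonempty) (hbdd : BddAbove A) :
    sSup A ∈ C.R :=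
  C.triple.rangeDedekind A hA hne hbdd

/-! `sm` facts -/

lemma aux_j_sm {g : E} (hg : g ∈ C.R) (f : E) : C.j (C.sm g f) = C.mul (C.j g) (C.j f) :=
  Function.invFun_eq (C.mulClosed g f ⟨|g|, C.aux_abs_mem hg, abs_nonneg g, le_refl _⟩)

lemma aux_sm_add_right {g : E} (hg : g ∈ C.R) (x y : E) :
    C.sm g (x + y) = C.sm g x + C.sm g y := by
  apply C.aux_j_inj
  rw [map_add, C.aux_j_sm hg, C.aux_j_sm hg, C.aux_j_sm hg, map_add, fa_add_right C.falg]

lemma aux_sm_zero_right {g : E} (hg : g ∈ C.R) : C.sm g 0 = 0 := by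
  apply C.aux_j_inj
  rw [C.aux_j_sm hg, map_zero, fa_zero_right C.falg]

lemma aux_sm_neg_right {g : E} (hg : g ∈ C.R) (x : E) : C.sm g (-x) = -C.sm g x := by
  apply C.aux_j_inj
  rw [map_neg, C.aux_j_sm hg, C.aux_j_sm hg, map_neg, fa_neg_right C.falg]

lemma aux_sm_sub_right {g : E} (hg : g ∈ C.R) (x y : E) :
    C.sm g (x - y) = C.sm g x - C.sm g y := by
  rw [sub_eq_add_neg, C.aux_sm_add_right hg, C.aux_sm_neg_right hg, sub_eq_add_neg]

lemma aux_sm_add_left {g g' : E} (hg : g ∈ C.R) (hg' : g' ∈ C.R) (x : E) :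
    C.sm (g + g') x = C.sm g x + C.sm g' x := by
  apply C.aux_j_inj
  rw [map_add, C.aux_j_sm (C.aux_add_mem hg hg'), C.aux_j_sm hg, C.aux_j_sm hg', map_add,
    C.falg.add_left]

lemma aux_sm_smul_left {g : E} (hg : g ∈ C.R) (r : ℝ) (x : E) :
    C.sm (r • g) x = r • C.sm g x := by
  apply C.aux_j_inj
  rw [map_smul, C.aux_j_sm (C.aux_smul_mem r hg), C.aux_j_sm hg, map_smul, C.falg.smul_left]

lemma aux_sm_sub_left {g g' : E} (hg : g ∈ C.R) (hg' : g' ∈ C.R) (x : E) :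
    C.sm (g - g') x = C.sm g x - C.sm g' x := by
  apply C.aux_j_inj
  rw [map_sub, C.aux_j_sm (C.aux_sub_mem hg hg'), C.aux_j_sm hg, C.aux_j_sm hg', map_sub,
    fa_sub_left C.falg]

lemma aux_sm_nonneg {g x : E} (hg : g ∈ C.R) (hg0 : 0 ≤ g) (hx0 : 0 ≤ x) :
    0 ≤ C.sm g x := by
  rw [← C.aux_j_nonneg, C.aux_j_sm hg]
  exact C.falg.mul_nonneg _ _ ((C.aux_j_nonneg).2 hg0) ((C.aux_j_nonneg).2 hx0)

lemma aux_sm_mono_right {g x y : E} (hg : g ∈ C.R) (hg0 : 0 ≤ g) (hxy : x ≤ y) :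
    C.sm g x ≤ C.sm g y := by
  rw [← C.aux_j_le_iff, C.aux_j_sm hg, C.aux_j_sm hg]
  exact fa_mono_right C.falg ((C.aux_j_nonneg).2 hg0) ((C.aux_j_le_iff).2 hxy)

lemma aux_sm_mono_left {g g' x : E} (hg : g ∈ C.R) (hg' : g' ∈ C.R) (hx0 : 0 ≤ x)
    (hgg : g ≤ g') : C.sm g x ≤ C.sm g' x := by
  rw [← C.aux_j_le_iff, C.aux_j_sm hg, C.aux_j_sm hg']
  exact fa_mono_left C.falg ((C.aux_j_nonneg).2 hx0) ((C.aux_j_le_iff).2 hgg)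

lemma aux_sm_abs {g : E} (hg : g ∈ C.R) (x : E) : |C.sm g x| = C.sm |g| |x| := by
  apply C.aux_j_inj
  rw [C.aux_j_abs, C.aux_j_sm hg, C.aux_j_sm (C.aux_abs_mem hg), C.aux_j_abs, C.aux_j_abs,
    fa_abs C.falg]

end CRT

namespace CRT

variable {E : Type u} {G : Type v}
variable [ConditionallyCompleteLattice E] [AddCommGroup E] [Module ℝ E]
  [CovariantClass E E (· + ·) (· ≤ ·)] [PosSMulMono ℝ E]
variable [ConditionallyCompleteLattice G] [AddCommGroup G] [Module ℝ G]
  [CovariantClass G G (· + ·) (· ≤ ·)] [PosSMulMono ℝ G]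
variable (C : CRT E G)

lemma aux_e_nonneg : (0 : E) ≤ C.e := C.triple.weakUnit.1.le

/-- The band-of-`h` component of `e`. -/
def cB (h : E) : E := sSup {y | ∃ n : ℕ, y = C.e ⊓ n • h}

lemma aux_cB_chain_ne (h : E) : {y | ∃ n : ℕ, y = C.e ⊓ n • h}.Nonempty :=
  ⟨C.e ⊓ 0 • h, 0, rfl⟩

lemma aux_cB_chain_bdd (h : E) : BddAbove {y | ∃ n : ℕ, y = C.e ⊓ n • h} :=
  ⟨C.e, by rintro _ ⟨n, rfl⟩; exact inf_le_left⟩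

lemma aux_cB_isLUB (h : E) : IsLUB {y | ∃ n : ℕ, y = C.e ⊓ n • h} (C.cB h) :=
  isLUB_csSup (C.aux_cB_chain_ne h) (C.aux_cB_chain_bdd h)

lemma aux_cB_mem_R {h : E} (hh : h ∈ C.R) : C.cB h ∈ C.R := by
  refine C.aux_sSup_mem ?_ (C.aux_cB_chain_ne h) (C.aux_cB_chain_bdd h)
  rintro _ ⟨n, rfl⟩
  exact C.aux_inf_mem C.aux_e_mem (C.aux_nsmul_mem n hh)

lemma aux_cB_le_e (h : E) : C.cB h ≤ C.e :=
  (C.aux_cB_isLUB h).2 (by rintro _ ⟨n, rfl⟩; exact inf_le_left)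

lemma aux_cB_nonneg {h : E} (h0 : 0 ≤ h) : 0 ≤ C.cB h := by
  refine le_trans ?_ ((C.aux_cB_isLUB h).1 ⟨0, rfl⟩)
  rw [zero_nsmul]
  exact le_inf C.aux_e_nonneg (le_refl 0)

lemma aux_cB_disj {h : E} (h0 : 0 ≤ h) : (C.e - C.cB h) ⊓ h = 0 := by
  set P := C.cB h with hPdef
  set d := (C.e - P) ⊓ h with hd
  have hd0 : 0 ≤ d := by
    rw [hd]
    refine le_inf (sub_nonneg.2 (C.aux_cB_le_e h)) h0
  have key : ∀ n : ℕ, n • d ≤ C.e := by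
    intro n
    have h1 : d ≤ (C.e - n • h) ⊔ 0 := by
      have h2 : C.e - P ≤ C.e - C.e ⊓ n • h :=
        sub_le_sub_left ((C.aux_cB_isLUB h).1 ⟨n, rfl⟩) C.e
      rw [aux_sub_inf] at h2
      exact le_trans inf_le_left h2
    have h3 : d ⊓ ((n • h - C.e) ⊔ 0) = 0 := by
      refine le_antisymm ?_ (le_inf hd0 le_sup_right)
      calc d ⊓ ((n • h - C.e) ⊔ 0) ≤ ((C.e - n • h) ⊔ 0) ⊓ ((n • h - C.e) ⊔ 0) :=
            inf_le_inf_right _ h1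
        _ = (C.e - n • h)⁺ ⊓ (C.e - n • h)⁻ := by
            rw [posPart_def, negPart_def, neg_sub]
        _ = 0 := posPart_inf_negPart_eq_zero _
    have h4 : n • d ⊓ ((n • h - C.e) ⊔ 0) = 0 := by
      rw [inf_comm] at h3 ⊢
      exact aux_disj_nsmul le_sup_right hd0 h3 n
    have h5 : n • d ≤ ((n • h - C.e) ⊔ 0) + n • h ⊓ C.e := by
      calc n • d ≤ n • h := nsmul_le_nsmul_right (inf_le_right.trans (le_refl h)) n
        _ = ((n • h - C.e) ⊔ 0) + n • h ⊓ C.e := by rw [← aux_sub_inf]; abel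
    have h6 : n • d ≤ n • h ⊓ C.e :=
      aux_disj_le h4 h5 (le_inf (nsmul_nonneg h0 n) C.aux_e_nonneg)
    exact h6.trans inf_le_right
  exact le_antisymm (aux_arch key) hd0

lemma aux_cB_comp {h : E} (h0 : 0 ≤ h) : C.cB h ∈ Comp C.e := by
  set P := C.cB h with hPdef
  have hdisj := C.aux_cB_disj h0
  have helt : ∀ n : ℕ, (C.e ⊓ n • h) ⊓ (C.e - P) = 0 := by
    intro n
    refine le_antisymm ?_ (le_inf (le_inf C.aux_e_nonneg (nsmul_nonneg h0 n))
      (sub_nonneg.2 (C.aux_cB_le_e h)))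
    have h1 : (C.e - P) ⊓ n • h = 0 :=
      aux_disj_nsmul (sub_nonneg.2 (C.aux_cB_le_e h)) h0 hdisj n
    calc (C.e ⊓ n • h) ⊓ (C.e - P) ≤ (n • h) ⊓ (C.e - P) :=
          inf_le_inf_right _ inf_le_right
      _ = 0 := by rw [inf_comm]; exact h1
  have hlub2 := aux_isLUB_inf (C.e - P) (C.aux_cB_isLUB h)
  show P ⊓ (C.e - P) = 0
  refine le_antisymm (hlub2.2 ?_) (le_inf (C.aux_cB_nonneg h0)
    (sub_nonneg.2 (C.aux_cB_le_e h)))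
  rintro _ ⟨_, ⟨n, rfl⟩, rfl⟩
  show (C.e ⊓ n • h) ⊓ (C.e - P) ≤ 0
  rw [helt n]

lemma aux_cB_smul_le {r : E} (hr0 : 0 ≤ r) {t : ℝ} (ht : 0 < t) :
    t • C.cB ((r - t • C.e) ⊔ 0) ≤ r := by
  set h := (r - t • C.e) ⊔ 0 with hhdef
  have h0 : (0:E) ≤ h := le_sup_right
  have hlub := C.aux_cB_isLUB h
  have hlub2 := aux_isLUB_smul ht hlub
  refine hlub2.2 ?_
  rintro _ ⟨_, ⟨n, rfl⟩, rfl⟩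
  set a := C.e ⊓ n • h with hadef
  have ha0 : 0 ≤ a := le_inf C.aux_e_nonneg (nsmul_nonneg h0 n)
  have hdisj1 : h ⊓ ((t • C.e - r) ⊔ 0) = 0 := by
    rw [hhdef]
    calc ((r - t • C.e) ⊔ 0) ⊓ ((t • C.e - r) ⊔ 0)
        = (r - t • C.e)⁺ ⊓ (r - t • C.e)⁻ := by rw [posPart_def, negPart_def, neg_sub]
      _ = 0 := posPart_inf_negPart_eq_zero _
  have hdisj2 : a ⊓ ((t • C.e - r) ⊔ 0) = 0 := by
    refine le_antisymm ?_ (le_inf ha0 le_sup_right)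
    calc a ⊓ ((t • C.e - r) ⊔ 0) ≤ (n • h) ⊓ ((t • C.e - r) ⊔ 0) :=
          inf_le_inf_right _ inf_le_right
      _ = 0 := by
          rw [inf_comm]
          exact aux_disj_nsmul le_sup_right h0 (by rw [inf_comm]; exact hdisj1) n
  have hdisj3 : (t • a) ⊓ ((t • C.e - r) ⊔ 0) = 0 :=
    aux_smul_disj ha0 le_sup_right hdisj2 ht.le
  have hle : t • a ≤ ((t • C.e - r) ⊔ 0) + (t • C.e) ⊓ r := by
    calc t • a ≤ t • C.e := smul_le_smul_of_nonneg_left inf_le_left ht.le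
      _ = ((t • C.e - r) ⊔ 0) + (t • C.e) ⊓ r := by rw [← aux_sub_inf]; abel
  have h7 : t • a ≤ (t • C.e) ⊓ r :=
    aux_disj_le hdisj3 hle (le_inf (smul_nonneg ht.le C.aux_e_nonneg) hr0)
  exact h7.trans inf_le_right

lemma aux_cB_sub_le {r : E} {t : ℝ} (ht : 0 < t) (hb : r - t • C.e ≤ t • C.e) :
    r - t • C.cB ((r - t • C.e) ⊔ 0) ≤ t • C.e := by
  set h := (r - t • C.e) ⊔ 0 with hhdef
  have h0 : (0:E) ≤ h := le_sup_right
  have hhte : h ≤ t • C.e := sup_le hb (smul_nonneg ht.le C.aux_e_nonneg)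
  have h1 : t⁻¹ • h ≤ C.e := by
    have := smul_le_smul_of_nonneg_left hhte (by positivity : (0:ℝ) ≤ t⁻¹)
    rwa [smul_smul, inv_mul_cancel₀ ht.ne', one_smul] at this
  have h2 : t⁻¹ • h ≤ (Nat.ceil t⁻¹) • h := by
    rw [← Nat.cast_smul_eq_nsmul ℝ]
    exact aux_smul_le_smul (Nat.le_ceil t⁻¹) h0
  have h3 : t⁻¹ • h ≤ C.cB h :=
    le_trans (le_inf h1 h2) ((C.aux_cB_isLUB h).1 ⟨Nat.ceil t⁻¹, rfl⟩)
  have h4 : h ≤ t • C.cB h := by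
    have := smul_le_smul_of_nonneg_left h3 ht.le
    rwa [smul_smul, mul_inv_cancel₀ ht.ne', one_smul] at this
  have h5 : r - t • C.e ≤ t • C.cB h := le_sup_left.trans h4
  calc r - t • C.cB h = (r - t • C.e) - t • C.cB h + t • C.e := by abel
    _ ≤ t • C.cB h - t • C.cB h + t • C.e := by
        exact add_le_add_left (sub_le_sub_right h5 _) _
    _ = t • C.e := by abel

lemma aux_sm_comp_mem {p x : E} (hpR : p ∈ C.R) (hpC : p ∈ Comp C.e) (hxR : x ∈ C.R)
    (hx0 : 0 ≤ x) : C.sm p x ∈ C.R ∧ 0 ≤ C.sm p x ∧ C.sm p x ≤ x := by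
  set Ech := {y | ∃ n : ℕ, y = x ⊓ n • p} with hEch
  have hp0 : 0 ≤ p := by
    have := hpC
    rw [Comp, Set.mem_setOf_eq] at this
    rw [← this]; exact inf_le_left
  have hne : Ech.Nonempty := ⟨x ⊓ 0 • p, 0, rfl⟩
  have hbdd : BddAbove Ech := ⟨x, by rintro _ ⟨n, rfl⟩; exact inf_le_left⟩
  have hlubE : IsLUB Ech (sSup Ech) := isLUB_csSup hne hbdd
  have hsR : sSup Ech ∈ C.R := by
    refine C.aux_sSup_mem ?_ hne hbdd
    rintro _ ⟨n, rfl⟩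
    exact C.aux_inf_mem hxR (C.aux_nsmul_mem n hpR)
  have hjp : C.j p ⊓ (C.j C.e - C.j p) = 0 := by
    have h1 : p ⊓ (C.e - p) = 0 := hpC
    have h2 := congrArg (⇑C.j) h1
    rwa [C.aux_j_inf, map_sub, map_zero] at h2
  have hG := fa_compLUB C.falg hjp ((C.aux_j_nonneg).2 hx0)
  have himg : ⇑C.j '' Ech = {v | ∃ n : ℕ, v = C.j x ⊓ n • C.j p} := by
    ext w
    constructor
    · rintro ⟨_, ⟨n, rfl⟩, rfl⟩
      exact ⟨n, by rw [C.aux_j_inf, map_nsmul]⟩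
    · rintro ⟨n, rfl⟩
      exact ⟨x ⊓ n • p, ⟨n, rfl⟩, by rw [C.aux_j_inf, map_nsmul]⟩
  have hlubG : IsLUB {v | ∃ n : ℕ, v = C.j x ⊓ n • C.j p} (C.j (sSup Ech)) := by
    have := C.aux_j_isLUB hlubE
    rwa [himg] at this
  have heq : C.j (C.sm p x) = C.j (sSup Ech) := by
    rw [C.aux_j_sm hpR]
    exact hG.unique hlubG
  have heq2 : C.sm p x = sSup Ech := C.aux_j_inj heq
  refine ⟨heq2 ▸ hsR, ?_, ?_⟩
  · rw [heq2]
    refine le_trans ?_ (hlubE.1 ⟨0, rfl⟩)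
    rw [zero_nsmul]
    exact le_inf hx0 (le_refl 0)
  · rw [heq2]
    exact hlubE.2 (by rintro _ ⟨n, rfl⟩; exact inf_le_left)

end CRT

namespace CRT

variable {E : Type u} {G : Type v}
variable [ConditionallyCompleteLattice E] [AddCommGroup E] [Module ℝ E]
  [CovariantClass E E (· + ·) (· ≤ ·)] [PosSMulMono ℝ E]
variable [ConditionallyCompleteLattice G] [AddCommGroup G] [Module ℝ G]
  [CovariantClass G G (· + ·) (· ≤ ·)] [PosSMulMono ℝ G]
variable (C : CRT E G)

lemma aux_sm_e (x : E) : C.sm C.e x = x := by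
  apply C.aux_j_inj
  rw [C.aux_j_sm C.aux_e_mem, C.falg.one_mul]

lemma aux_stepA {x : E} (hxR : x ∈ C.R) (hx0 : 0 ≤ x) :
    ∀ k : ℕ, ∀ t : ℝ, 0 < t → ∀ g : E, g ∈ C.R → 0 ≤ g → g ≤ t • C.e →
      ∃ F ∈ C.R, F ≤ C.sm g x ∧ C.sm g x - F ≤ (t / 2 ^ k) • x := by
  intro k
  induction k with
  | zero =>
    intro t ht g hgR hg0 hgb
    refine ⟨0, C.aux_zero_mem, C.aux_sm_nonneg hgR hg0 hx0, ?_⟩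
    rw [sub_zero]
    have h1 : C.sm g x ≤ C.sm (t • C.e) x :=
      C.aux_sm_mono_left hgR (C.aux_smul_mem t C.aux_e_mem) hx0 hgb
    rw [C.aux_sm_smul_left C.aux_e_mem, C.aux_sm_e] at h1
    simpa using h1
  | succ k ih =>
    intro t ht g hgR hg0 hgb
    set s := t / 2 with hs
    have hs0 : 0 < s := by positivity
    set q := C.cB ((g - s • C.e) ⊔ 0) with hq
    have hhR : (g - s • C.e) ⊔ 0 ∈ C.R :=
      C.aux_posPart_mem (C.aux_sub_mem hgR (C.aux_smul_mem _ C.aux_e_mem))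
    have hqR : q ∈ C.R := C.aux_cB_mem_R hhR
    have hqC : q ∈ Comp C.e := C.aux_cB_comp le_sup_right
    set g' := g - s • q with hg'
    have hg'R : g' ∈ C.R := C.aux_sub_mem hgR (C.aux_smul_mem _ hqR)
    have hg'0 : 0 ≤ g' := sub_nonneg.2 (C.aux_cB_smul_le hg0 hs0)
    have hg'b : g' ≤ s • C.e := by
      have hts : t • C.e = s • C.e + s • C.e := by
        rw [← add_smul]; congr 1; rw [hs]; ring
      have hb2 : g - s • C.e ≤ s • C.e := by
        calc g - s • C.e ≤ t • C.e - s • C.e := sub_le_sub_right hgb _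
          _ = s • C.e := by rw [hts]; abel
      exact C.aux_cB_sub_le hs0 hb2
    obtain ⟨F', hF'R, hF'le, hF'err⟩ := ih s hs0 g' hg'R hg'0 hg'b
    have hsmq := C.aux_sm_comp_mem hqR hqC hxR hx0
    have hsplit : C.sm g x = C.sm g' x + s • C.sm q x := by
      have hgeq : g = g' + s • q := by rw [hg']; abel
      conv_lhs => rw [hgeq]
      rw [C.aux_sm_add_left hg'R (C.aux_smul_mem _ hqR), C.aux_sm_smul_left hqR]
    refine ⟨F' + s • C.sm q x, C.aux_add_mem hF'R (C.aux_smul_mem _ hsmq.1), ?_, ?_⟩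
    · rw [hsplit]
      exact add_le_add_left hF'le _
    · rw [hsplit]
      have h3 : C.sm g' x + s • C.sm q x - (F' + s • C.sm q x) = C.sm g' x - F' := by abel
      rw [h3]
      have h4 : s / 2 ^ k = t / 2 ^ (k + 1) := by rw [hs]; ring
      rwa [h4] at hF'err

lemma aux_sm_mem_bdd {g x : E} (hgR : g ∈ C.R) (hg0 : 0 ≤ g) {t : ℝ} (ht : 0 < t)
    (hgb : g ≤ t • C.e) (hxR : x ∈ C.R) (hx0 : 0 ≤ x) : C.sm g x ∈ C.R := by
  set S := {F | F ∈ C.R ∧ F ≤ C.sm g x} with hS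
  have hne : S.Nonempty := ⟨0, C.aux_zero_mem, C.aux_sm_nonneg hgR hg0 hx0⟩
  have hbdd : BddAbove S := ⟨C.sm g x, fun F hF => hF.2⟩
  have hFR : sSup S ∈ C.R := C.aux_sSup_mem (fun F hF => hF.1) hne hbdd
  have hFle : sSup S ≤ C.sm g x := csSup_le hne (fun F hF => hF.2)
  have harch : ∀ n : ℕ, n • (C.sm g x - sSup S) ≤ t • x := by
    intro n
    obtain ⟨F, hFR', hFle', hFerr⟩ := C.aux_stepA hxR hx0 n t ht g hgR hg0 hgb
    have h1 : C.sm g x - sSup S ≤ (t / 2 ^ n) • x :=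
      le_trans (sub_le_sub_left (le_csSup hbdd ⟨hFR', hFle'⟩) _) hFerr
    have hn2 : (n : ℝ) ≤ 2 ^ n := by exact_mod_cast Nat.le_of_lt (Nat.lt_two_pow_self (n := n))
    have h2 : (n : ℝ) * (t / 2 ^ n) ≤ t := by
      rw [mul_div_assoc']
      rw [div_le_iff₀ (by positivity : (0:ℝ) < 2 ^ n)]
      nlinarith [mul_nonneg ht.le (sub_nonneg.2 hn2)]
    calc n • (C.sm g x - sSup S) = (n : ℝ) • (C.sm g x - sSup S) :=
          (Nat.cast_smul_eq_nsmul ℝ n _).symm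
      _ ≤ (n : ℝ) • ((t / 2 ^ n) • x) := smul_le_smul_of_nonneg_left h1 (Nat.cast_nonneg n)
      _ = ((n : ℝ) * (t / 2 ^ n)) • x := by rw [smul_smul]
      _ ≤ t • x := aux_smul_le_smul h2 hx0
  have h3 : C.sm g x - sSup S ≤ 0 := aux_arch harch
  have h4 : C.sm g x = sSup S := le_antisymm (by rwa [sub_nonpos] at h3) hFle
  rw [h4]; exact hFR

lemma aux_sm_mem_nonneg {g x : E} (hgR : g ∈ C.R) (hg0 : 0 ≤ g) (hxR : x ∈ C.R)
    (hx0 : 0 ≤ x) : C.sm g x ∈ C.R := by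
  set gn := fun n : ℕ => g ⊓ (((n : ℝ) + 1) • C.e) with hgn
  have hgnR : ∀ n, gn n ∈ C.R := fun n => C.aux_inf_mem hgR (C.aux_smul_mem _ C.aux_e_mem)
  have hgn0 : ∀ n, 0 ≤ gn n := fun n =>
    le_inf hg0 (smul_nonneg (by positivity) C.aux_e_nonneg)
  have hmem : ∀ n, C.sm (gn n) x ∈ C.R := fun n =>
    C.aux_sm_mem_bdd (hgnR n) (hgn0 n) (by positivity : (0:ℝ) < (n:ℝ) + 1) inf_le_right hxR hx0
  set S := Set.range (fun n => C.sm (gn n) x) with hS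
  have hne : S.Nonempty := ⟨_, 0, rfl⟩
  have hub : ∀ n, C.sm (gn n) x ≤ C.sm g x := fun n =>
    C.aux_sm_mono_left (hgnR n) hgR hx0 inf_le_left
  have hbdd : BddAbove S := ⟨C.sm g x, by rintro _ ⟨n, rfl⟩; exact hub n⟩
  have hsR : sSup S ∈ C.R := C.aux_sSup_mem (by rintro _ ⟨n, rfl⟩; exact hmem n) hne hbdd
  have hsle : sSup S ≤ C.sm g x := csSup_le hne (by rintro _ ⟨n, rfl⟩; exact hub n)
  have hOC : ∀ n : ℕ, C.j (C.sm g x - sSup S) ≤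
      C.mul ((C.j g - n • C.j C.e) ⊔ 0) (C.j x) := by
    intro n
    rcases n with _ | m
    · have h1 : (C.j g - (0:ℕ) • C.j C.e) ⊔ 0 = C.j g := by
        rw [zero_nsmul, sub_zero, sup_eq_left.2 ((C.aux_j_nonneg).2 hg0)]
      rw [h1, ← C.aux_j_sm hgR]
      refine (C.aux_j_le_iff).2 ?_
      have h2 : 0 ≤ sSup S := le_trans (C.aux_sm_nonneg (hgnR 0) (hgn0 0) hx0)
        (le_csSup hbdd ⟨0, rfl⟩)
      calc C.sm g x - sSup S ≤ C.sm g x - 0 := sub_le_sub_left h2 _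
        _ = C.sm g x := by rw [sub_zero]
    · have hkey : g - gn m = (g - ((m : ℝ) + 1) • C.e) ⊔ 0 := by
        rw [hgn]; exact aux_sub_inf g _
      have h1 : C.j (C.sm g x - sSup S) ≤ C.j (C.sm g x - C.sm (gn m) x) := by
        refine (C.aux_j_le_iff).2 (sub_le_sub_left (le_csSup hbdd ⟨m, rfl⟩) _)
      have h2 : C.j (C.sm g x - C.sm (gn m) x) =
          C.mul ((C.j g - (m + 1 : ℕ) • C.j C.e) ⊔ 0) (C.j x) := by
        rw [map_sub, C.aux_j_sm hgR, C.aux_j_sm (hgnR m), ← fa_sub_left C.falg,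
          ← map_sub, hkey]
        congr 1
        have h3 : C.j ((g - ((m : ℝ) + 1) • C.e) ⊔ 0) =
            (C.j g - ((m : ℝ) + 1) • C.j C.e) ⊔ 0 := by
          rw [C.aux_j_sup, map_zero, map_sub, map_smul]
        rw [h3]
        congr 2
        rw [← Nat.cast_smul_eq_nsmul ℝ (m + 1) (C.j C.e)]
        norm_num
      exact h1.trans_eq h2
  have h5 : C.j (C.sm g x - sSup S) ≤ 0 :=
    fa_OC1 C.falg ((C.aux_j_nonneg).2 hg0) ((C.aux_j_nonneg).2 hx0) hOC
  have h6 : C.sm g x - sSup S ≤ 0 := by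
    rw [← map_zero C.j] at h5
    exact (C.aux_j_le_iff).1 h5
  have h7 : C.sm g x = sSup S := le_antisymm (by rwa [sub_nonpos] at h6) hsle
  rw [h7]; exact hsR

lemma aux_sm_mem {g x : E} (hgR : g ∈ C.R) (hxR : x ∈ C.R) : C.sm g x ∈ C.R := by
  have hgp : g ⊔ 0 ∈ C.R := C.aux_posPart_mem hgR
  have hgm : (-g) ⊔ 0 ∈ C.R := C.aux_posPart_mem (C.aux_neg_mem hgR)
  have hxp : x ⊔ 0 ∈ C.R := C.aux_posPart_mem hxR
  have hxm : (-x) ⊔ 0 ∈ C.R := C.aux_posPart_mem (C.aux_neg_mem hxR)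
  have hg : g = (g ⊔ 0) - ((-g) ⊔ 0) := by
    rw [← posPart_def, ← negPart_def, posPart_sub_negPart]
  have hx : x = (x ⊔ 0) - ((-x) ⊔ 0) := by
    rw [← posPart_def, ← negPart_def, posPart_sub_negPart]
  have key : ∀ a b : E, a ∈ C.R → b ∈ C.R → 0 ≤ a → 0 ≤ b → C.sm a b ∈ C.R :=
    fun a b ha hb ha0 hb0 => C.aux_sm_mem_nonneg ha ha0 hb hb0
  have hrw : C.sm g x = C.sm (g ⊔ 0) (x ⊔ 0) - C.sm (g ⊔ 0) ((-x) ⊔ 0) -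
      (C.sm ((-g) ⊔ 0) (x ⊔ 0) - C.sm ((-g) ⊔ 0) ((-x) ⊔ 0)) := by
    conv_lhs => rw [hg, hx]
    rw [C.aux_sm_sub_left hgp hgm, C.aux_sm_sub_right hgp, C.aux_sm_sub_right hgm]
  rw [hrw]
  refine C.aux_sub_mem (C.aux_sub_mem ?_ ?_) (C.aux_sub_mem ?_ ?_) <;>
    apply key <;> first
      | assumption
      | exact le_sup_right
end CRT

variable {E : Type u} {G : Type v}
variable [ConditionallyCompleteLattice E] [AddCommGroup E] [Module ℝ E]
  [CovariantClass E E (· + ·) (· ≤ ·)] [PosSMulMono ℝ E]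
variable [ConditionallyCompleteLattice G] [AddCommGroup G] [Module ℝ G]
  [CovariantClass G G (· + ·) (· ≤ ·)] [PosSMulMono ℝ G]

lemma aux_abs_smul_le (r : ℝ) (y : E) : |r • y| ≤ |r| • |y| := by
  rcases le_or_gt 0 r with hr | hr
  · rw [abs_of_nonneg hr]
    refine abs_le'.2 ⟨smul_le_smul_of_nonneg_left (le_abs_self y) hr, ?_⟩
    rw [← smul_neg]
    exact smul_le_smul_of_nonneg_left (neg_le_abs y) hr
  · rw [abs_of_neg hr]
    refine abs_le'.2 ⟨?_, ?_⟩
    · have h1 : r • y = (-r) • (-y) := by rw [neg_smul, smul_neg, neg_neg]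
      rw [h1]
      exact smul_le_smul_of_nonneg_left (neg_le_abs y) (by linarith)
    · have h1 : -(r • y) = (-r) • y := by rw [neg_smul]
      rw [h1]
      exact smul_le_smul_of_nonneg_left (le_abs_self y) (by linarith)

namespace CRT

variable (C : CRT E G)

lemma aux_comp_nonneg {p : E} (hp : p ∈ Comp C.e) : 0 ≤ p := by
  have hp' : p ⊓ (C.e - p) = 0 := hp
  rw [← hp']; exact inf_le_left

lemma aux_comp_le {p : E} (hp : p ∈ Comp C.e) : p ≤ C.e := by
  have hp' : p ⊓ (C.e - p) = 0 := hp
  have h1 : (0:E) ≤ C.e - p := by rw [← hp']; exact inf_le_right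
  have := sub_nonneg.1 h1
  exact this

lemma aux_comp_compl {p : E} (hp : p ∈ Comp C.e) : C.e - p ∈ Comp C.e := by
  have hp' : p ⊓ (C.e - p) = 0 := hp
  show (C.e - p) ⊓ (C.e - (C.e - p)) = 0
  rw [sub_sub_cancel, inf_comm]
  exact hp'

lemma aux_comp_zero : (0:E) ∈ Comp C.e := by
  show (0:E) ⊓ (C.e - 0) = 0
  rw [sub_zero]
  exact inf_of_le_left C.aux_e_nonneg

lemma aux_comp_e : C.e ∈ Comp C.e := by
  show C.e ⊓ (C.e - C.e) = 0
  rw [sub_self]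
  exact inf_of_le_right C.aux_e_nonneg

/-- The Riesz–Kantorovich set for `|μ|(e)`. -/
def chS (μ : E → E) : Set E :=
  {v | ∃ q, q ∈ Comp C.e ∧ q ≤ C.e ∧ v = μ q - μ (C.e - q)}

lemma aux_chargeAbs_eq (μ : E → E) : chargeAbs C.e μ C.e = sSup (C.chS μ) := rfl

lemma aux_chS_ne (μ : E → E) : (C.chS μ).Nonempty :=
  ⟨μ 0 - μ (C.e - 0), 0, C.aux_comp_zero, C.aux_e_nonneg, rfl⟩

lemma aux_chS_bdd (μ : E → E) (g₀ : E) (hb : ∀ p ∈ Comp C.e, |μ p| ≤ g₀) :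
    BddAbove (C.chS μ) := by
  refine ⟨g₀ + g₀, ?_⟩
  rintro _ ⟨q, hq, hqe, rfl⟩
  calc μ q - μ (C.e - q) ≤ |μ q| - μ (C.e - q) := sub_le_sub_right (le_abs_self _) _
    _ = |μ q| + -μ (C.e - q) := by rw [sub_eq_add_neg]
    _ ≤ |μ q| + |μ (C.e - q)| := add_le_add_right (neg_le_abs _) _
    _ ≤ g₀ + g₀ := add_le_add (hb q hq) (hb _ (C.aux_comp_compl hq))

lemma aux_chS_symm (μ : E → E) : ∀ v ∈ C.chS μ, -v ∈ C.chS μ := by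
  rintro _ ⟨q, hq, hqe, rfl⟩
  refine ⟨C.e - q, C.aux_comp_compl hq, C.aux_comp_le (C.aux_comp_compl hq), ?_⟩
  rw [sub_sub_cancel]
  abel

lemma aux_chS_sm {g : E} (hg : g ∈ C.R) (μ : E → E) :
    C.chS (fun p => C.sm g (μ p)) = (fun v => C.sm g v) '' C.chS μ := by
  ext w
  constructor
  · rintro ⟨q, hq, hqe, hw⟩
    refine ⟨μ q - μ (C.e - q), ⟨q, hq, hqe, rfl⟩, ?_⟩
    show C.sm g (μ q - μ (C.e - q)) = w
    rw [C.aux_sm_sub_right hg]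
    exact hw.symm
  · rintro ⟨v, ⟨q, hq, hqe, hv⟩, hw⟩
    refine ⟨q, hq, hqe, ?_⟩
    show w = C.sm g (μ q) - C.sm g (μ (C.e - q))
    rw [← hw, hv]
    exact C.aux_sm_sub_right hg _ _

end CRT


/-- Let `(E,e,T)` be a `T`-universally complete conditional Riesz
triple.  Then `ba(C_e, R(T))` is an `R(T)`-module under pointwise operations, and
`μ ↦ |μ|(e)` is an `R(T)`-valued norm on it: it satisfies the triangle inequality,
`‖gμ‖ = |g|·‖μ‖` for `g ∈ R(T)`, and `‖μ‖ = 0` iff `μ = 0` (on components). -/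
theorem ba_module_and_norm {E : Type u} {G : Type v}
    [ConditionallyCompleteLattice E] [AddCommGroup E] [Module ℝ E]
    [CovariantClass E E (· + ·) (· ≤ ·)] [PosSMulMono ℝ E]
    [ConditionallyCompleteLattice G] [AddCommGroup G] [Module ℝ G]
    [CovariantClass G G (· + ·) (· ≤ ·)] [PosSMulMono ℝ G]
    (C : CRT E G) :
    -- `ba(C_e,R(T))` is an R(T)-module under pointwise operations
    (∀ μ ∈ C.baR C.e, ∀ ν ∈ C.baR C.e, (fun p => μ p + ν p) ∈ C.baR C.e) ∧
    (∀ μ ∈ C.baR C.e, ∀ r : ℝ, (fun p => r • μ p) ∈ C.baR C.e) ∧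
    (∀ μ ∈ C.baR C.e, ∀ g ∈ C.R, (fun p => C.sm g (μ p)) ∈ C.baR C.e) ∧
    -- the triangle inequality
    (∀ μ ∈ C.baR C.e, ∀ ν ∈ C.baR C.e,
      chargeAbs C.e (fun p => μ p + ν p) C.e ≤ chargeAbs C.e μ C.e + chargeAbs C.e ν C.e) ∧
    -- absolute homogeneity
    (∀ μ ∈ C.baR C.e, ∀ g ∈ C.R,
      chargeAbs C.e (fun p => C.sm g (μ p)) C.e = C.sm |g| (chargeAbs C.e μ C.e)) ∧
    -- definiteness
    (∀ μ ∈ C.baR C.e, (chargeAbs C.e μ C.e = 0 ↔ ∀ p ∈ Comp C.e, μ p = 0)) := by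
  refine ⟨?_, ?_, ?_, ?_, ?_, ?_⟩
  -- (1) closed under addition
  · rintro μ ⟨⟨hμ0, hμadd⟩, hμR, g₀, hg₀R, hg₀0, hg₀b⟩ ν ⟨⟨hν0, hνadd⟩, hνR, g₁, hg₁R, hg₁0, hg₁b⟩
    refine ⟨⟨by simp [hμ0, hν0], ?_⟩, ?_, g₀ + g₁, C.aux_add_mem hg₀R hg₁R,
      add_nonneg hg₀0 hg₁0, ?_⟩
    · intro p q hp hq hpq
      show μ (p + q) + ν (p + q) = (μ p + ν p) + (μ q + ν q)
      rw [hμadd p q hp hq hpq, hνadd p q hp hq hpq]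
      abel
    · intro p hp
      exact C.aux_add_mem (hμR p hp) (hνR p hp)
    · intro p hp
      calc |μ p + ν p| ≤ |μ p| + |ν p| := abs_add_le (μ p) (ν p)
        _ ≤ g₀ + g₁ := add_le_add (hg₀b p hp) (hg₁b p hp)
  -- (2) closed under scalar multiplication
  · rintro μ ⟨⟨hμ0, hμadd⟩, hμR, g₀, hg₀R, hg₀0, hg₀b⟩ r
    refine ⟨⟨by simp [hμ0], ?_⟩, ?_, |r| • g₀, C.aux_smul_mem _ hg₀R,
      smul_nonneg (abs_nonneg r) hg₀0, ?_⟩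
    · intro p q hp hq hpq
      show r • μ (p + q) = r • μ p + r • μ q
      rw [hμadd p q hp hq hpq, smul_add]
    · intro p hp
      exact C.aux_smul_mem r (hμR p hp)
    · intro p hp
      calc |r • μ p| ≤ |r| • |μ p| := aux_abs_smul_le r (μ p)
        _ ≤ |r| • g₀ := smul_le_smul_of_nonneg_left (hg₀b p hp) (abs_nonneg r)
  -- (3) closed under R(T)-module multiplication
  · rintro μ ⟨⟨hμ0, hμadd⟩, hμR, g₀, hg₀R, hg₀0, hg₀b⟩ g hg
    refine ⟨⟨?_, ?_⟩, ?_, C.sm |g| g₀, C.aux_sm_mem (C.aux_abs_mem hg) hg₀R,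
      C.aux_sm_nonneg (C.aux_abs_mem hg) (abs_nonneg g) hg₀0, ?_⟩
    · show C.sm g (μ 0) = 0
      rw [hμ0, C.aux_sm_zero_right hg]
    · intro p q hp hq hpq
      show C.sm g (μ (p + q)) = C.sm g (μ p) + C.sm g (μ q)
      rw [hμadd p q hp hq hpq, C.aux_sm_add_right hg]
    · intro p hp
      exact C.aux_sm_mem hg (hμR p hp)
    · intro p hp
      rw [C.aux_sm_abs hg]
      exact C.aux_sm_mono_right (C.aux_abs_mem hg) (abs_nonneg g) (hg₀b p hp)
  -- (4) triangle inequality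
  · rintro μ ⟨⟨hμ0, hμadd⟩, hμR, g₀, hg₀R, hg₀0, hg₀b⟩ ν ⟨⟨hν0, hνadd⟩, hνR, g₁, hg₁R, hg₁0, hg₁b⟩
    rw [C.aux_chargeAbs_eq, C.aux_chargeAbs_eq, C.aux_chargeAbs_eq]
    refine csSup_le (C.aux_chS_ne _) ?_
    rintro _ ⟨q, hq, hqe, rfl⟩
    have h1 : μ q - μ (C.e - q) ≤ sSup (C.chS μ) :=
      le_csSup (C.aux_chS_bdd μ g₀ hg₀b) ⟨q, hq, hqe, rfl⟩
    have h2 : ν q - ν (C.e - q) ≤ sSup (C.chS ν) :=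
      le_csSup (C.aux_chS_bdd ν g₁ hg₁b) ⟨q, hq, hqe, rfl⟩
    calc (fun p => μ p + ν p) q - (fun p => μ p + ν p) (C.e - q)
        = (μ q - μ (C.e - q)) + (ν q - ν (C.e - q)) := by
          show μ q + ν q - (μ (C.e - q) + ν (C.e - q)) = _; abel
      _ ≤ sSup (C.chS μ) + sSup (C.chS ν) := add_le_add h1 h2
  -- (5) absolute homogeneity
  · rintro μ ⟨⟨hμ0, hμadd⟩, hμR, g₀, hg₀R, hg₀0, hg₀b⟩ g hg
    have hne := C.aux_chS_ne μ
    have hbdd := C.aux_chS_bdd μ g₀ hg₀b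
    have hlubE : IsLUB (C.chS μ) (sSup (C.chS μ)) := isLUB_csSup hne hbdd
    have hlubG := C.aux_j_isLUB hlubE
    have hsymG : ∀ v ∈ ⇑C.j '' C.chS μ, -v ∈ ⇑C.j '' C.chS μ := by
      rintro _ ⟨v, hv, rfl⟩
      exact ⟨-v, C.aux_chS_symm μ v hv, map_neg _ _⟩
    have hM := fa_M C.falg (hne.image _) hsymG hlubG (C.j g)
    have himg : (fun v => C.mul (C.j g) v) '' (⇑C.j '' C.chS μ) =
        ⇑C.j '' ((fun v => C.sm g v) '' C.chS μ) := by
      rw [← Set.image_comp, ← Set.image_comp]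
      apply Set.image_congr
      intro v _
      exact (C.aux_j_sm hg v).symm
    have habs : C.mul |C.j g| (C.j (sSup (C.chS μ))) = C.j (C.sm |g| (sSup (C.chS μ))) := by
      rw [C.aux_j_sm (C.aux_abs_mem hg), C.aux_j_abs]
    rw [himg, habs] at hM
    have hlubE2 := C.aux_isLUB_of_j hM
    rw [C.aux_chargeAbs_eq, C.aux_chargeAbs_eq, C.aux_chS_sm hg]
    exact hlubE2.csSup_eq (hne.image _)
  -- (6) definiteness
  · rintro μ ⟨⟨hμ0, hμadd⟩, hμR, g₀, hg₀R, hg₀0, hg₀b⟩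
    constructor
    · intro h0 p hp
      rw [C.aux_chargeAbs_eq] at h0
      have hbdd := C.aux_chS_bdd μ g₀ hg₀b
      have hle : ∀ v ∈ C.chS μ, v ≤ 0 := fun v hv => (le_csSup hbdd hv).trans_eq h0
      have hpc := C.aux_comp_compl hp
      have hv1 : μ p - μ (C.e - p) ≤ 0 := hle _ ⟨p, hp, C.aux_comp_le hp, rfl⟩
      have hv2 : μ (C.e - p) - μ p ≤ 0 := by
        have := hle _ ⟨C.e - p, hpc, C.aux_comp_le hpc, rfl⟩
        rwa [sub_sub_cancel] at this
      have heq : μ p = μ (C.e - p) := le_antisymm (sub_nonpos.1 hv1) (sub_nonpos.1 hv2)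
      have hμe : μ C.e = 0 := by
        have he1 : μ C.e - μ (C.e - C.e) ≤ 0 := hle _ ⟨C.e, C.aux_comp_e, le_refl _, rfl⟩
        have he2 : μ 0 - μ (C.e - 0) ≤ 0 := hle _ ⟨0, C.aux_comp_zero, C.aux_e_nonneg, rfl⟩
        rw [sub_self, hμ0, sub_zero] at he1
        rw [sub_zero, hμ0, zero_sub, neg_nonpos] at he2
        exact le_antisymm he1 he2
      have hsum : μ C.e = μ p + μ (C.e - p) := by
        have h1 : p + (C.e - p) = C.e := by abel
        have h2 := hμadd p (C.e - p) hp hpc hp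
        rw [h1] at h2
        exact h2
      have h3 : μ p + μ p = 0 := by
        rw [← heq] at hsum
        rw [← hsum, hμe]
      have h4 : (2:ℝ) • μ p = 0 := by rw [two_smul]; exact h3
      have h5 := congrArg (fun y => (2:ℝ)⁻¹ • y) h4
      simpa [smul_smul] using h5
    · intro hz
      rw [C.aux_chargeAbs_eq]
      have hset : C.chS μ = {0} := by
        ext v
        constructor
        · rintro ⟨q, hq, hqe, rfl⟩
          rw [hz q hq, hz _ (C.aux_comp_compl hq), sub_zero]
          rfl
        · rintro rfl
          exact ⟨0, C.aux_comp_zero, C.aux_e_nonneg, by rw [hz 0 C.aux_comp_zero, sub_zero,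
            hz _ C.aux_comp_e, sub_zero]⟩
      rw [hset, csSup_singleton]


end RieszPaper

end
end

section
/- Let (E,e,T) be a T-universally complete conditional Riesz triple and μ ∈ ba(C_e,R(T)). Then |μ|(e) = sup{ Σ_{p ∈ Z} |μ(p)| : Z ⊆ C_e is a finite partition of e }, where the supremum is taken in R(T); i.e., the R(T)-valued norm ‖μ‖_{ba(C_e,R(T))} = |μ|(e) equals the total variation of μ. -/
open scoped Classical

noncomputable section

namespace RieszPaper

universe u v w

/-! ### Auxiliary lemmas for the total variation theorem -/

section TVAux

set_option linter.unusedSectionVars false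

variable {E : Type u} [ConditionallyCompleteLattice E] [AddCommGroup E]
  [CovariantClass E E (· + ·) (· ≤ ·)]

private lemma tv_inf_add_le {x b c : E} (hx : 0 ≤ x) (hb : 0 ≤ b) (hc : 0 ≤ c) :
    x ⊓ (b + c) ≤ x ⊓ b + x ⊓ c := by
  rw [← sub_le_iff_le_add']
  have h : x ⊓ (b + c) - x ⊓ b = (x ⊓ (b + c) - x) ⊔ (x ⊓ (b + c) - b) := by
    rw [sub_eq_add_neg, neg_inf, add_sup, ← sub_eq_add_neg, ← sub_eq_add_neg]
  rw [h]
  refine sup_le (le_trans (sub_nonpos.2 inf_le_left) (le_inf hx hc)) (le_inf ?_ ?_)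
  · exact le_trans (sub_le_self _ hb) inf_le_left
  · exact sub_le_iff_le_add'.2 inf_le_right

private lemma tv_disj_mono {x y a b : E} (hx : 0 ≤ x) (hy : 0 ≤ y) (hxa : x ≤ a)
    (hyb : y ≤ b) (hab : a ⊓ b = 0) : x ⊓ y = 0 :=
  le_antisymm (le_of_le_of_eq (inf_le_inf hxa hyb) hab) (le_inf hx hy)

private lemma tv_comp_nonneg {e p : E} (hp : p ∈ Comp e) : 0 ≤ p := by
  have h : p ⊓ (e - p) = 0 := hp
  rw [← h]; exact inf_le_left

private lemma tv_comp_le {e p : E} (hp : p ∈ Comp e) : p ≤ e := by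
  have h : p ⊓ (e - p) = 0 := hp
  have h2 : (0 : E) ≤ e - p := by rw [← h]; exact inf_le_right
  exact sub_nonneg.1 h2

private lemma tv_comp_zero {e : E} (he : 0 ≤ e) : (0 : E) ∈ Comp e := by
  show (0 : E) ⊓ (e - 0) = 0
  rw [sub_zero]; exact inf_eq_left.2 he

private lemma tv_comp_self {e : E} (he : 0 ≤ e) : e ∈ Comp e := by
  show e ⊓ (e - e) = 0
  rw [sub_self]; exact inf_eq_right.2 he

private lemma tv_comp_compl {e p : E} (hp : p ∈ Comp e) : e - p ∈ Comp e := by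
  show (e - p) ⊓ (e - (e - p)) = 0
  rw [sub_sub_cancel, inf_comm]; exact hp

private lemma tv_comp_sub {e p q : E} (hp : p ∈ Comp e) (hq : q ∈ Comp e) (hqp : q ≤ p) :
    p - q ∈ Comp e := by
  have hp' : p ⊓ (e - p) = 0 := hp
  have hq' : q ⊓ (e - q) = 0 := hq
  have h0q : 0 ≤ q := tv_comp_nonneg hq
  have h0pq : 0 ≤ p - q := sub_nonneg.2 hqp
  have hple : p ≤ e := tv_comp_le hp
  show (p - q) ⊓ (e - (p - q)) = 0
  have he' : e - (p - q) = (e - p) + q := by abel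
  rw [he']
  refine le_antisymm ?_ (le_inf h0pq (add_nonneg (sub_nonneg.2 hple) h0q))
  calc (p - q) ⊓ ((e - p) + q) ≤ (p - q) ⊓ (e - p) + (p - q) ⊓ q :=
        tv_inf_add_le h0pq (sub_nonneg.2 hple) h0q
    _ = 0 := by
        rw [tv_disj_mono h0pq (sub_nonneg.2 hple) (sub_le_self p h0q) le_rfl hp',
          tv_disj_mono h0pq h0q (sub_le_sub_right hple q) le_rfl
            (by rw [inf_comm]; exact hq'), add_zero]

private lemma tv_comp_add {e p q : E} (hp : p ∈ Comp e) (hq : q ∈ Comp e)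
    (hd : p ⊓ q = 0) : p + q ∈ Comp e := by
  have hp' : p ⊓ (e - p) = 0 := hp
  have hq' : q ⊓ (e - q) = 0 := hq
  have h0p : 0 ≤ p := tv_comp_nonneg hp
  have h0q : 0 ≤ q := tv_comp_nonneg hq
  have hple : p ≤ e := tv_comp_le hp
  have hqle : q ≤ e := tv_comp_le hq
  have hqep : q ≤ e - p := by
    have h4 : q ⊓ p = 0 := by rw [inf_comm]; exact hd
    calc q = q ⊓ ((e - p) + p) := by
            rw [show (e - p) + p = e by abel]; exact (inf_eq_left.2 hqle).symm
      _ ≤ q ⊓ (e - p) + q ⊓ p := tv_inf_add_le h0q (sub_nonneg.2 hple) h0p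
      _ = q ⊓ (e - p) := by rw [h4, add_zero]
      _ ≤ e - p := inf_le_right
  have hpqe : p + q ≤ e := by
    have h := add_le_add_left hqep p
    rwa [show e - p + p = e by abel, add_comm] at h
  show (p + q) ⊓ (e - (p + q)) = 0
  have hx0 : (0 : E) ≤ e - (p + q) := sub_nonneg.2 hpqe
  refine le_antisymm ?_ (le_inf (add_nonneg h0p h0q) hx0)
  calc (p + q) ⊓ (e - (p + q)) = (e - (p + q)) ⊓ (p + q) := inf_comm _ _
    _ ≤ (e - (p + q)) ⊓ p + (e - (p + q)) ⊓ q := tv_inf_add_le hx0 h0p h0q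
    _ = 0 := by
        rw [tv_disj_mono hx0 h0p (sub_le_sub_left (le_add_of_nonneg_right h0q) e) le_rfl
            (by rw [inf_comm]; exact hp'),
          tv_disj_mono hx0 h0q (sub_le_sub_left (le_add_of_nonneg_left h0p) e) le_rfl
            (by rw [inf_comm]; exact hq'), add_zero]

private lemma tv_sum_nonneg {ι : Type w} {p : ι → E} (s : Finset ι) (h : ∀ i, 0 ≤ p i) :
    0 ≤ ∑ i ∈ s, p i := by
  classical
  induction s using Finset.induction with
  | empty => simp
  | @insert a t ha ih => rw [Finset.sum_insert ha]; exact add_nonneg (h a) ih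

private lemma tv_disj_sum {x : E} (hx : 0 ≤ x) {ι : Type w} {p : ι → E}
    (h0 : ∀ i, 0 ≤ p i) (s : Finset ι) (hd : ∀ i ∈ s, x ⊓ p i = 0) :
    x ⊓ ∑ i ∈ s, p i = 0 := by
  classical
  induction s using Finset.induction with
  | empty => simp only [Finset.sum_empty]; exact inf_eq_right.2 hx
  | @insert a t ha ih =>
      rw [Finset.sum_insert ha]
      refine le_antisymm ?_ (le_inf hx (add_nonneg (h0 a) (tv_sum_nonneg t h0)))
      calc x ⊓ (p a + ∑ i ∈ t, p i) ≤ x ⊓ p a + x ⊓ ∑ i ∈ t, p i :=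
            tv_inf_add_le hx (h0 a) (tv_sum_nonneg t h0)
        _ = 0 := by
            rw [hd a (Finset.mem_insert_self a t),
              ih (fun i hi => hd i (Finset.mem_insert_of_mem hi)), add_zero]

/-- The set whose supremum defines `chargeAbs e μ p`. -/
private def VS (e : E) (μ : E → E) (p : E) : Set E :=
  {v | ∃ q, q ∈ Comp e ∧ q ≤ p ∧ v = μ q - μ (p - q)}

private lemma tv_mem_self {e p : E} {μ : E → E} (hz : μ 0 = 0) (hp : p ∈ Comp e) :
    μ p ∈ VS e μ p :=
  ⟨p, hp, le_rfl, by rw [sub_self, hz, sub_zero]⟩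

private lemma tv_mem_neg {e p : E} {μ : E → E} (hz : μ 0 = 0) (he : 0 ≤ e)
    (hp : p ∈ Comp e) : -μ p ∈ VS e μ p :=
  ⟨0, tv_comp_zero he, tv_comp_nonneg hp, by rw [sub_zero, hz, zero_sub]⟩

private lemma tv_nonemptyVS {e p : E} {μ : E → E} (hz : μ 0 = 0) (hp : p ∈ Comp e) :
    (VS e μ p).Nonempty :=
  ⟨μ p, tv_mem_self hz hp⟩

private lemma tv_bddAboveVS {e p g : E} {μ : E → E}
    (hg : ∀ r ∈ Comp e, |μ r| ≤ g) (hp : p ∈ Comp e) : BddAbove (VS e μ p) := by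
  refine ⟨g + g, ?_⟩
  rintro v ⟨q, hq, hqp, rfl⟩
  have h1 : μ q ≤ g := le_trans (le_abs_self _) (hg q hq)
  have h2 : -μ (p - q) ≤ g := le_trans (neg_le_abs _) (hg _ (tv_comp_sub hp hq hqp))
  calc μ q - μ (p - q) = μ q + -μ (p - q) := sub_eq_add_neg _ _
    _ ≤ g + g := add_le_add h1 h2

private lemma tv_abs_le_sSup {e p g : E} {μ : E → E} (hz : μ 0 = 0) (he : 0 ≤ e)
    (hg : ∀ r ∈ Comp e, |μ r| ≤ g) (hp : p ∈ Comp e) : |μ p| ≤ sSup (VS e μ p) :=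
  abs_le'.2 ⟨le_csSup (tv_bddAboveVS hg hp) (tv_mem_self hz hp),
    le_csSup (tv_bddAboveVS hg hp) (tv_mem_neg hz he hp)⟩

private lemma tv_memVS_add {e p p' : E} {μ : E → E}
    (hadd : ∀ r s : E, r ∈ Comp e → s ∈ Comp e → r ⊓ s = 0 → μ (r + s) = μ r + μ s)
    (hp : p ∈ Comp e) (hp' : p' ∈ Comp e) (hd : p ⊓ p' = 0)
    {v v' : E} (hv : v ∈ VS e μ p) (hv' : v' ∈ VS e μ p') :
    v + v' ∈ VS e μ (p + p') := by
  obtain ⟨q, hq, hqp, rfl⟩ := hv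
  obtain ⟨q', hq', hqp', rfl⟩ := hv'
  have h0q : 0 ≤ q := tv_comp_nonneg hq
  have h0q' : 0 ≤ q' := tv_comp_nonneg hq'
  have hdq : q ⊓ q' = 0 := tv_disj_mono h0q h0q' hqp hqp' hd
  refine ⟨q + q', tv_comp_add hq hq' hdq, add_le_add hqp hqp', ?_⟩
  have hpq : p - q ∈ Comp e := tv_comp_sub hp hq hqp
  have hpq' : p' - q' ∈ Comp e := tv_comp_sub hp' hq' hqp'
  have hd2 : (p - q) ⊓ (p' - q') = 0 :=
    tv_disj_mono (sub_nonneg.2 hqp) (sub_nonneg.2 hqp')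
      (sub_le_self p h0q) (sub_le_self p' h0q') hd
  have e2 : (p + p') - (q + q') = (p - q) + (p' - q') := by abel
  rw [hadd q q' hq hq' hdq, e2, hadd _ _ hpq hpq' hd2]
  abel

private lemma tv_superadd {e p p' g : E} {μ : E → E} (hz : μ 0 = 0)
    (hadd : ∀ r s : E, r ∈ Comp e → s ∈ Comp e → r ⊓ s = 0 → μ (r + s) = μ r + μ s)
    (hg : ∀ r ∈ Comp e, |μ r| ≤ g)
    (hp : p ∈ Comp e) (hp' : p' ∈ Comp e) (hd : p ⊓ p' = 0) :
    sSup (VS e μ p) + sSup (VS e μ p') ≤ sSup (VS e μ (p + p')) := by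
  have hpp' : p + p' ∈ Comp e := tv_comp_add hp hp' hd
  have hbdd : BddAbove (VS e μ (p + p')) := tv_bddAboveVS hg hpp'
  have step : ∀ v ∈ VS e μ p, ∀ v' ∈ VS e μ p', v + v' ≤ sSup (VS e μ (p + p')) :=
    fun v hv v' hv' => le_csSup hbdd (tv_memVS_add hadd hp hp' hd hv hv')
  rw [← le_sub_iff_add_le']
  refine csSup_le (tv_nonemptyVS hz hp') (fun v' hv' => ?_)
  rw [le_sub_comm]
  refine csSup_le (tv_nonemptyVS hz hp) (fun v hv => ?_)
  rw [le_sub_iff_add_le]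
  exact step v hv v' hv'

private lemma tv_partition_le {e g : E} {μ : E → E} (he : 0 ≤ e) (hz : μ 0 = 0)
    (hadd : ∀ r s : E, r ∈ Comp e → s ∈ Comp e → r ⊓ s = 0 → μ (r + s) = μ r + μ s)
    (hg : ∀ r ∈ Comp e, |μ r| ≤ g) {n : ℕ} {p : Fin n → E}
    (hc : ∀ i, p i ∈ Comp e) (hdisj : ∀ i j, i ≠ j → p i ⊓ p j = 0)
    (s : Finset (Fin n)) :
    (∑ i ∈ s, p i) ∈ Comp e ∧ (∑ i ∈ s, |μ (p i)|) ≤ sSup (VS e μ (∑ i ∈ s, p i)) := by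
  classical
  induction s using Finset.induction with
  | empty =>
      simp only [Finset.sum_empty]
      exact ⟨tv_comp_zero he, le_csSup (tv_bddAboveVS hg (tv_comp_zero he))
        ⟨0, tv_comp_zero he, le_rfl, by rw [sub_zero, hz, sub_zero]⟩⟩
  | @insert a s ha ih =>
      obtain ⟨hsC, hsle⟩ := ih
      have h0 : ∀ i, 0 ≤ p i := fun i => tv_comp_nonneg (hc i)
      have hdpa : p a ⊓ ∑ i ∈ s, p i = 0 :=
        tv_disj_sum (h0 a) h0 s (fun i hi => hdisj a i (by rintro rfl; exact ha hi))
      constructor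
      · rw [Finset.sum_insert ha]
        exact tv_comp_add (hc a) hsC hdpa
      · rw [Finset.sum_insert ha, Finset.sum_insert ha]
        calc |μ (p a)| + ∑ i ∈ s, |μ (p i)|
            ≤ sSup (VS e μ (p a)) + sSup (VS e μ (∑ i ∈ s, p i)) :=
              add_le_add (tv_abs_le_sSup hz he hg (hc a)) hsle
          _ ≤ sSup (VS e μ (p a + ∑ i ∈ s, p i)) :=
              tv_superadd hz hadd hg (hc a) hsC hdpa

end TVAux

/-- Let `(E,e,T)` be a `T`-universally complete conditional Riesz
triple and `μ ∈ ba(C_e,R(T))`.  Then `|μ|(e)` is the supremum (taken in `R(T)`) of the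
sums `∑_{p ∈ Z} |μ(p)|` over all finite partitions `Z` of `e` into pairwise disjoint
components, i.e. the `R(T)`-valued norm `‖μ‖ = |μ|(e)` equals the total variation. -/
theorem ba_norm_eq_total_variation {E : Type u} {G : Type v}
    [ConditionallyCompleteLattice E] [AddCommGroup E] [Module ℝ E]
    [CovariantClass E E (· + ·) (· ≤ ·)] [PosSMulMono ℝ E]
    [ConditionallyCompleteLattice G] [AddCommGroup G] [Module ℝ G]
    [CovariantClass G G (· + ·) (· ≤ ·)] [PosSMulMono ℝ G]
    (C : CRT E G) (μ : E → E) (hμ : μ ∈ C.baR C.e) :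
    IsLUB {v : E | ∃ (n : ℕ) (p : Fin n → E),
        (∀ i, p i ∈ Comp C.e) ∧ (∀ i j, i ≠ j → p i ⊓ p j = 0) ∧
        (∑ i, p i) = C.e ∧ v = ∑ i, |μ (p i)|}
      (chargeAbs C.e μ C.e) ∧
    chargeAbs C.e μ C.e ∈ C.R := by
  obtain ⟨⟨hz, hadd⟩, hR, g, hgR, hg0, hg⟩ := hμ
  have he : (0 : E) ≤ C.e := le_of_lt C.triple.weakUnit.1
  have hVe : chargeAbs C.e μ C.e = sSup (VS C.e μ C.e) := rfl
  constructor
  · constructor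
    · -- upper bound
      rintro v ⟨n, p, hc, hdisj, hsum, rfl⟩
      obtain ⟨-, hle⟩ := tv_partition_le he hz hadd hg hc hdisj Finset.univ
      rw [hsum] at hle
      rw [hVe]
      exact hle
    · -- least upper bound
      intro b hb
      rw [hVe]
      refine csSup_le (tv_nonemptyVS hz (tv_comp_self he)) ?_
      rintro v ⟨q, hq, hqe, rfl⟩
      have hq' : C.e - q ∈ Comp C.e := tv_comp_compl hq
      have hq0 : q ⊓ (C.e - q) = 0 := hq
      have hq0' : (C.e - q) ⊓ q = 0 := by rw [inf_comm]; exact hq0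
      have hmem : |μ q| + |μ (C.e - q)| ∈ {v : E | ∃ (n : ℕ) (p : Fin n → E),
          (∀ i, p i ∈ Comp C.e) ∧ (∀ i j, i ≠ j → p i ⊓ p j = 0) ∧
          (∑ i, p i) = C.e ∧ v = ∑ i, |μ (p i)|} := by
        refine ⟨2, ![q, C.e - q], ?_, ?_, ?_, ?_⟩
        · intro i
          fin_cases i
          · simpa using hq
          · simpa using hq'
        · intro i j hij
          fin_cases i <;> fin_cases j <;>
            simp_all [Matrix.cons_val_zero, Matrix.cons_val_one, Matrix.head_cons]
        · simp only [Fin.sum_univ_two, Matrix.cons_val_zero, Matrix.cons_val_one,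
            Matrix.head_cons]
          abel
        · simp only [Fin.sum_univ_two, Matrix.cons_val_zero, Matrix.cons_val_one,
            Matrix.head_cons]
      have h1 : μ q - μ (C.e - q) ≤ |μ q| + |μ (C.e - q)| := by
        rw [sub_eq_add_neg]
        exact add_le_add (le_abs_self _) (neg_le_abs _)
      exact le_trans h1 (hb hmem)
  · -- membership in R(T)
    have hsub : VS C.e μ C.e ⊆ Set.range ⇑C.T := by
      rintro v ⟨q, hq, hqe, rfl⟩
      obtain ⟨x, hx⟩ := hR q hq
      obtain ⟨y, hy⟩ := hR (C.e - q) (tv_comp_compl hq)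
      exact ⟨x - y, by rw [map_sub, hx, hy]⟩
    rw [hVe]
    exact C.triple.rangeDedekind _ hsub (tv_nonemptyVS hz (tv_comp_self he))
      (tv_bddAboveVS hg (tv_comp_self he))

end RieszPaper

end
end
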